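/- arXiv:1910.06197 — 2 statements merged into one kernel-verified Lean document; each statement's English description precedes it below -/
import Mathlib

section
/- Let $R$ be an irreducible simply-laced root system, $\alpha$ a simple root with minuscule fundamental weight $\varpi_\alpha$, $I = S\setminus\{\alpha\}$, and let $w \in W$ satisfy $w(I) \subseteq R^+$. Fix a reduced decomposition $w = s_{\beta_1} s_{\beta_2} \cdots s_{\beta_r}$ into reflections at simple roots $\beta_i$, and set $v_i := s_{\beta_i}s_{\beta_{i-1}}\cdots s_{\beta_1}$ and $\gamma_i := v_i(\beta_1)$ for $1 \le i \le r$. Then each $\gamma_i$ is a negative root and $\gamma_{i+1} \le \gamma_i$ for all $1 \le i \le r-1$, where $\le$ is the usual partial order on the root lattice (difference is a non-negative combination of simple roots). -/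
open scoped RealInnerProductSpace

noncomputable section

variable {V : Type} [NormedAddCommGroup V] [InnerProductSpace ℝ V]

/-- The reflection of `V` in the hyperplane orthogonal to `α`
(the identity map when `α = 0`). -/
def reflVec (α : V) : V ≃ₗ[ℝ] V where
  toFun x := x - (2 * ⟪x, α⟫ / ⟪α, α⟫) • α
  invFun x := x - (2 * ⟪x, α⟫ / ⟪α, α⟫) • α
  map_add' x y := by
    have h : 2 * ⟪x + y, α⟫ / ⟪α, α⟫ = 2 * ⟪x, α⟫ / ⟪α, α⟫ + 2 * ⟪y, α⟫ / ⟪α, α⟫ := by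
      rw [inner_add_left]; ring
    rw [h, add_smul]; abel
  map_smul' r x := by
    have h : 2 * ⟪r • x, α⟫ / ⟪α, α⟫ = r * (2 * ⟪x, α⟫ / ⟪α, α⟫) := by
      rw [real_inner_smul_left]; ring
    simp only [RingHom.id_apply]
    rw [h, mul_smul, smul_sub]
  left_inv x := by
    dsimp only
    by_cases h : (⟪α, α⟫ : ℝ) = 0
    · simp [inner_self_eq_zero.mp h]
    · have h2 : 2 * ⟪x - (2 * ⟪x, α⟫ / ⟪α, α⟫) • α, α⟫ / ⟪α, α⟫
          = -(2 * ⟪x, α⟫ / ⟪α, α⟫) := by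
        rw [inner_sub_left, real_inner_smul_left]
        field_simp
        ring
      rw [h2, neg_smul, sub_neg_eq_add, sub_add_cancel]
  right_inv x := by
    dsimp only
    by_cases h : (⟪α, α⟫ : ℝ) = 0
    · simp [inner_self_eq_zero.mp h]
    · have h2 : 2 * ⟪x - (2 * ⟪x, α⟫ / ⟪α, α⟫) • α, α⟫ / ⟪α, α⟫
          = -(2 * ⟪x, α⟫ / ⟪α, α⟫) := by
        rw [inner_sub_left, real_inner_smul_left]
        field_simp
        ring
      rw [h2, neg_smul, sub_neg_eq_add, sub_add_cancel]

/-- The pairing `⟨x, y^∨⟩ = 2(x,y)/(y,y)` of a vector with the coroot of `y`. -/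
def cpair (x y : V) : ℝ := 2 * ⟪x, y⟫ / ⟪y, y⟫

/-- A (reduced, crystallographic) root system in a real inner product space,
together with a chosen system of simple roots. -/
structure RootSystemData (V : Type) [NormedAddCommGroup V] [InnerProductSpace ℝ V] where
  roots : Finset V
  simples : Finset V
  simples_subset : simples ⊆ roots
  root_ne_zero : ∀ α ∈ roots, α ≠ 0
  pairing_int : ∀ α ∈ roots, ∀ β ∈ roots, ∃ n : ℤ, (n : ℝ) = cpair α β
  reflect_mem : ∀ α ∈ roots, ∀ β ∈ roots, reflVec α β ∈ roots
  reduced : ∀ α ∈ roots, ∀ t : ℝ, t • α ∈ roots → t = 1 ∨ t = -1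
  simples_indep : LinearIndependent ℝ (fun a : {x // x ∈ simples} => (a : V))
  root_pos_or_neg : ∀ β ∈ roots,
    (∃ c : V → ℕ, β = ∑ α ∈ simples, (c α : ℝ) • α) ∨
    (∃ c : V → ℕ, -β = ∑ α ∈ simples, (c α : ℝ) • α)

namespace RootSystemData

/-- `v` is a non-negative integer combination of the elements of `I`. -/
def IsPosCombOf (P : RootSystemData V) (I : Finset V) (v : V) : Prop :=
  ∃ c : V → ℕ, v = ∑ α ∈ I, (c α : ℝ) • α

/-- `v` is a non-negative integer combination of the simple roots. -/
def IsPosComb (P : RootSystemData V) (v : V) : Prop := P.IsPosCombOf P.simples v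

/-- The set of positive roots. -/
def Pos (P : RootSystemData V) : Set V := {β | β ∈ P.roots ∧ P.IsPosComb β}

/-- The set of negative roots. -/
def Neg (P : RootSystemData V) : Set V := {β | -β ∈ P.Pos}

/-- The positive roots lying in the root subsystem generated by `I`. -/
def PosOf (P : RootSystemData V) (I : Finset V) : Set V := {β | β ∈ P.roots ∧ P.IsPosCombOf I β}

/-- The half sum of the positive roots. -/
def rho (P : RootSystemData V) : V := (2 : ℝ)⁻¹ • ∑ᶠ β ∈ P.Pos, β

/-- The half sum of the positive roots in the root subsystem generated by `I`. -/
def rhoOf (P : RootSystemData V) (I : Finset V) : V := (2 : ℝ)⁻¹ • ∑ᶠ β ∈ P.PosOf I, β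

/-- The parabolic subgroup of the Weyl group generated by the reflections
in the elements of `I`. -/
def WeylOf (P : RootSystemData V) (I : Finset V) : Subgroup (V ≃ₗ[ℝ] V) :=
  Subgroup.closure (reflVec '' (I : Set V))

/-- The Weyl group, generated by the simple reflections. -/
def Weyl (P : RootSystemData V) : Subgroup (V ≃ₗ[ℝ] V) := P.WeylOf P.simples

/-- `l` is a word with letters in `I` whose associated product of reflections is `w`. -/
def IsWordOf (P : RootSystemData V) (I : Finset V) (l : List V) (w : V ≃ₗ[ℝ] V) : Prop :=
  (∀ α ∈ l, α ∈ I) ∧ (l.map reflVec).prod = w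

/-- The length of `w` with respect to the reflections in the elements of `I`. -/
def lengthOf (P : RootSystemData V) (I : Finset V) (w : V ≃ₗ[ℝ] V) : ℕ :=
  sInf {n | ∃ l, P.IsWordOf I l w ∧ l.length = n}

/-- The Coxeter length of `w` with respect to the simple reflections. -/
def length (P : RootSystemData V) (w : V ≃ₗ[ℝ] V) : ℕ := P.lengthOf P.simples w

/-- `l` is a reduced decomposition of `w` into simple reflections. -/
def IsReducedWord (P : RootSystemData V) (l : List V) (w : V ≃ₗ[ℝ] V) : Prop :=
  P.IsWordOf P.simples l w ∧ l.length = P.length w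

/-- The partial order on the root lattice: `x ≤ y` iff `y - x` is a non-negative
integer combination of simple roots. -/
def rootLE (P : RootSystemData V) (x y : V) : Prop := P.IsPosComb (y - x)

/-- The root system is simply laced: all roots have the same length. -/
def SimplyLaced (P : RootSystemData V) : Prop := ∀ α ∈ P.roots, ∀ β ∈ P.roots, ⟪α, α⟫ = ⟪β, β⟫

/-- The root system is irreducible: it admits no decomposition into two
non-empty mutually orthogonal parts. -/
def Irred (P : RootSystemData V) : Prop :=
  ∀ A B : Set V, (P.roots : Set V) ⊆ A ∪ B →
    (∀ a ∈ A ∩ (P.roots : Set V), ∀ b ∈ B ∩ (P.roots : Set V), ⟪a, b⟫ = 0) →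
    A ∩ (P.roots : Set V) = ∅ ∨ B ∩ (P.roots : Set V) = ∅

/-- `ϖ` is the fundamental weight associated with the simple root `α`. -/
def IsFundamentalWeight (P : RootSystemData V) (α ϖ : V) : Prop :=
  cpair ϖ α = 1 ∧ ∀ γ ∈ P.simples, γ ≠ α → cpair ϖ γ = 0

/-- The weight `ϖ` is minuscule: it pairs with every positive coroot by at most `1`. -/
def IsMinusculeWeight (P : RootSystemData V) (ϖ : V) : Prop := ∀ β ∈ P.Pos, cpair ϖ β ≤ 1

/-- The support of `w`: the set of simple roots whose reflections occur in a
reduced decomposition of `w`. -/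
def Supp (P : RootSystemData V) (w : V ≃ₗ[ℝ] V) : Set V :=
  {δ | δ ∈ P.simples ∧ ∃ l, P.IsReducedWord l w ∧ δ ∈ l}

end RootSystemData

lemma cpair_def (x y : V) : cpair x y = 2 * ⟪x, y⟫ / ⟪y, y⟫ := rfl

lemma reflVec_apply (α x : V) : reflVec α x = x - (2 * ⟪x, α⟫ / ⟪α, α⟫) • α := rfl

lemma reflVec_apply' (α x : V) : reflVec α x = x - cpair x α • α := rfl

lemma inner_reflVec (α x y : V) : ⟪reflVec α x, reflVec α y⟫ = ⟪x, y⟫ := by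
  by_cases h : α = 0
  · simp [reflVec_apply, h]
  · have hq : ⟪α, α⟫ ≠ 0 := inner_self_ne_zero.mpr h
    rw [reflVec_apply, reflVec_apply]
    simp only [inner_sub_left, inner_sub_right, real_inner_smul_left, real_inner_smul_right]
    rw [real_inner_comm α x, real_inner_comm α y]
    field_simp
    ring

lemma reflVec_symm (α : V) : (reflVec α).symm = reflVec α := by
  ext x; rfl

lemma reflVec_inv (α : V) : (reflVec α)⁻¹ = reflVec α := reflVec_symm α

lemma reflVec_mul_self (α : V) : reflVec α * reflVec α = 1 := by
  have := inv_mul_cancel (reflVec α)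
  rwa [reflVec_inv] at this

lemma reflVec_self (α : V) (h : α ≠ 0) : reflVec α α = -α := by
  have hq : ⟪α, α⟫ ≠ 0 := inner_self_ne_zero.mpr h
  rw [reflVec_apply, mul_div_assoc, div_self hq, mul_one, two_smul]
  abel

lemma mulApply (e f : V ≃ₗ[ℝ] V) (x : V) : (e * f) x = e (f x) := rfl

def wpr (m : List V) : V ≃ₗ[ℝ] V := (m.map reflVec).prod

lemma wpr_nil : wpr ([] : List V) = 1 := rfl

lemma wpr_cons (a : V) (m : List V) : wpr (a :: m) = reflVec a * wpr m := by
  simp [wpr]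

lemma wpr_append (m₁ m₂ : List V) : wpr (m₁ ++ m₂) = wpr m₁ * wpr m₂ := by
  simp [wpr]

lemma wpr_singleton (a : V) : wpr [a] = reflVec a := by simp [wpr]

lemma wpr_reverse (m : List V) : wpr m.reverse = (wpr m)⁻¹ := by
  induction m with
  | nil => simp [wpr]
  | cons a t ih =>
      rw [List.reverse_cons, wpr_append, ih, wpr_singleton, wpr_cons, mul_inv_rev, reflVec_inv]

lemma inner_wpr (m : List V) (x y : V) : ⟪wpr m x, wpr m y⟫ = ⟪x, y⟫ := by
  induction m with
  | nil => rfl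
  | cons a t ih => rw [wpr_cons, mulApply, mulApply, inner_reflVec, ih]

lemma reflVec_conj (u : V ≃ₗ[ℝ] V) (hu : ∀ x y, ⟪u x, u y⟫ = ⟪x, y⟫) (γ : V) :
    reflVec (u γ) = u * reflVec γ * u⁻¹ := by
  ext x
  show x - (2 * ⟪x, u γ⟫ / ⟪u γ, u γ⟫) • u γ = u ((u⁻¹ : V ≃ₗ[ℝ] V) x - (2 * ⟪(u⁻¹ : V ≃ₗ[ℝ] V) x, γ⟫ / ⟪γ, γ⟫) • γ)
  have hx : u ((u⁻¹ : V ≃ₗ[ℝ] V) x) = x := u.apply_symm_apply x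
  rw [map_sub, map_smul, hx]
  have h1 : ⟪x, u γ⟫ = ⟪(u⁻¹ : V ≃ₗ[ℝ] V) x, γ⟫ := by
    conv_lhs => rw [← hx]
    rw [hu]
  rw [h1, hu γ γ]

section Combinatorics

variable [DecidableEq V] (P : RootSystemData V)

lemma coeff_eq_zero (c : V → ℝ) (h : ∑ δ ∈ P.simples, c δ • δ = 0) :
    ∀ δ ∈ P.simples, c δ = 0 := by
  intro δ hδ
  have h2 := Fintype.linearIndependent_iff.mp P.simples_indep (fun a => c a)
  have hs : ∑ i : {x // x ∈ P.simples}, c i • (i : V) = 0 := by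
    rw [Finset.sum_coe_sort P.simples (fun δ => c δ • δ)]; exact h
  exact h2 hs ⟨δ, hδ⟩

lemma posComb_add {u v : V} (hu : P.IsPosComb u) (hv : P.IsPosComb v) :
    P.IsPosComb (u + v) := by
  obtain ⟨c, hc⟩ := hu
  obtain ⟨e, he⟩ := hv
  refine ⟨fun x => c x + e x, ?_⟩
  rw [hc, he, ← Finset.sum_add_distrib]
  apply Finset.sum_congr rfl
  intro x _
  push_cast
  rw [add_smul]

lemma posComb_nsmul (n : ℕ) {δ : V} (hδ : δ ∈ P.simples) :
    P.IsPosComb ((n : ℝ) • δ) := by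
  refine ⟨fun x => if x = δ then n else 0, ?_⟩
  have : ∀ x ∈ P.simples, ((if x = δ then (n:ℕ) else 0 : ℕ) : ℝ) • x
      = if x = δ then (n : ℝ) • x else 0 := by
    intro x _
    by_cases h : x = δ <;> simp [h]
  rw [Finset.sum_congr rfl this, Finset.sum_ite_eq' P.simples δ (fun x => (n:ℝ) • x),
    if_pos hδ]

lemma posComb_single {δ : V} (hδ : δ ∈ P.simples) : P.IsPosComb δ := by
  have := posComb_nsmul P 1 hδ
  rwa [Nat.cast_one, one_smul] at this

lemma eq_zero_of_posComb {v : V} (h1 : P.IsPosComb v) (h2 : P.IsPosComb (-v)) :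
    v = 0 := by
  obtain ⟨c, hc⟩ := h1
  obtain ⟨e, he⟩ := h2
  have hsum : ∑ δ ∈ P.simples, ((c δ : ℝ) + (e δ : ℝ)) • δ = 0 := by
    simp only [add_smul]
    rw [Finset.sum_add_distrib, ← hc, ← he]
    abel
  have h0 := coeff_eq_zero P _ hsum
  have hz : ∀ δ ∈ P.simples, (c δ : ℝ) = 0 := by
    intro δ hδ
    have := h0 δ hδ
    have h1' : (0:ℝ) ≤ (c δ : ℝ) := Nat.cast_nonneg _
    have h2' : (0:ℝ) ≤ (e δ : ℝ) := Nat.cast_nonneg _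
    linarith
  rw [hc]
  exact Finset.sum_eq_zero (fun δ hδ => by rw [hz δ hδ, zero_smul])

lemma neg_root_mem {β : V} (hβ : β ∈ P.roots) : -β ∈ P.roots := by
  have := P.reflect_mem β hβ β hβ
  rwa [reflVec_self β (P.root_ne_zero β hβ)] at this

lemma root_pos_or_neg' {β : V} (hβ : β ∈ P.roots) : β ∈ P.Pos ∨ β ∈ P.Neg := by
  rcases P.root_pos_or_neg β hβ with h | h
  · exact Or.inl ⟨hβ, h⟩
  · exact Or.inr ⟨neg_root_mem P hβ, h⟩

lemma not_pos_and_neg {β : V} (h1 : β ∈ P.Pos) (h2 : β ∈ P.Neg) : False := by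
  have h0 := eq_zero_of_posComb P h1.2 h2.2
  exact P.root_ne_zero β h1.1 h0

lemma wpr_roots {m : List V} (hm : ∀ x ∈ m, x ∈ P.roots) {γ : V} (hγ : γ ∈ P.roots) :
    wpr m γ ∈ P.roots := by
  induction m with
  | nil => exact hγ
  | cons a t ih =>
      rw [wpr_cons, mulApply]
      exact P.reflect_mem a (hm a (List.mem_cons_self)) _
        (ih (fun x hx => hm x (List.mem_cons_of_mem a hx)))

lemma reflVec_simple_pos {β γ : V} (hβs : β ∈ P.simples) (hγ : γ ∈ P.Pos) (hne : γ ≠ β) :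
    reflVec β γ ∈ P.Pos := by
  obtain ⟨hγr, c, hc⟩ := hγ
  have hβr := P.simples_subset hβs
  have hδ0 : ∃ δ₀ ∈ P.simples, δ₀ ≠ β ∧ c δ₀ ≠ 0 := by
    by_contra hcon
    push_neg at hcon
    have hcb : γ = (c β : ℝ) • β := by
      rw [hc]
      rw [Finset.sum_eq_single β]
      · intro x hx hxb
        rw [hcon x hx hxb, Nat.cast_zero, zero_smul]
      · intro hβn; exact absurd hβs hβn
    have hcb0 : c β ≠ 0 := by
      intro h0
      rw [h0, Nat.cast_zero, zero_smul] at hcb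
      exact P.root_ne_zero γ hγr hcb
    rcases P.reduced β hβr (c β) (hcb ▸ hγr) with h1 | h1
    · apply hne
      rw [hcb, h1, one_smul]
    · have : (0:ℝ) ≤ (c β : ℝ) := Nat.cast_nonneg _
      rw [h1] at this
      linarith
  obtain ⟨δ₀, hδ₀s, hδ₀β, hcδ₀⟩ := hδ0
  obtain ⟨n, hn⟩ := P.pairing_int γ hγr β hβr
  have hrefl : reflVec β γ = γ - (n : ℝ) • β := by
    rw [reflVec_apply', ← hn]
  have hroot : reflVec β γ ∈ P.roots := P.reflect_mem β hβr γ hγr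
  rcases root_pos_or_neg' P hroot with h | h
  · exact h
  · exfalso
    obtain ⟨_, e, he⟩ := h
    have hsum : ∑ δ ∈ P.simples,
        ((c δ : ℝ) + (e δ : ℝ) - (if δ = β then (n : ℝ) else 0)) • δ = 0 := by
      simp only [sub_smul, add_smul]
      rw [Finset.sum_sub_distrib, Finset.sum_add_distrib, ← hc, ← he]
      have hite : ∑ δ ∈ P.simples, (if δ = β then (n:ℝ) else 0) • δ = (n:ℝ) • β := by
        simp only [ite_smul, zero_smul]
        rw [Finset.sum_ite_eq' P.simples β (fun δ => (n:ℝ) • δ), if_pos hβs]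
      rw [hite, hrefl]
      abel
    have h0 := coeff_eq_zero P _ hsum δ₀ hδ₀s
    rw [if_neg hδ₀β] at h0
    have h1' : (0:ℝ) < (c δ₀ : ℝ) := by exact_mod_cast Nat.pos_of_ne_zero hcδ₀
    have h2' : (0:ℝ) ≤ (e δ₀ : ℝ) := Nat.cast_nonneg _
    linarith

lemma exch : ∀ (m : List V), (∀ x ∈ m, x ∈ P.simples) → ∀ γ ∈ P.Pos, wpr m γ ∈ P.Neg →
    ∃ j < m.length, wpr m * reflVec γ = wpr (m.eraseIdx j) := by
  intro m
  induction m with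
  | nil =>
      intro _ γ hγ hneg
      rw [wpr_nil] at hneg
      exact absurd hγ (fun h => not_pos_and_neg P h hneg)
  | cons a t ih =>
      intro hm γ hγ hneg
      by_cases h : wpr t γ ∈ P.Neg
      · obtain ⟨j, hj, he⟩ := ih (fun x hx => hm x (List.mem_cons_of_mem a hx)) γ hγ h
        refine ⟨j + 1, by simpa using Nat.succ_lt_succ hj, ?_⟩
        rw [List.eraseIdx_cons_succ, wpr_cons, wpr_cons, mul_assoc, he]
      · have hroot : wpr t γ ∈ P.roots :=
          wpr_roots P (fun x hx => P.simples_subset (hm x (List.mem_cons_of_mem a hx))) hγ.1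
        have hpos : wpr t γ ∈ P.Pos := (root_pos_or_neg' P hroot).resolve_right h
        have ha : wpr t γ = a := by
          by_contra hne
          have hres := reflVec_simple_pos P (hm a (List.mem_cons_self)) hpos hne
          rw [wpr_cons, mulApply] at hneg
          exact not_pos_and_neg P hres hneg
        refine ⟨0, Nat.succ_pos _, ?_⟩
        have hconj : reflVec a = wpr t * reflVec γ * (wpr t)⁻¹ := by
          rw [← ha]; exact reflVec_conj (wpr t) (inner_wpr t) γ
        rw [List.eraseIdx_cons_zero, wpr_cons, hconj, inv_mul_cancel_right,
          mul_assoc, reflVec_mul_self, mul_one]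

end Combinatorics

section Lengths

variable [DecidableEq V] (P : RootSystemData V)

lemma wpr_eq_prod (m : List V) : (m.map reflVec).prod = wpr m := rfl

lemma length_le_word {m : List V} {u : V ≃ₗ[ℝ] V} (h : P.IsWordOf P.simples m u) :
    P.length u ≤ m.length :=
  Nat.sInf_le ⟨m, h, rfl⟩

lemma word_wpr {m : List V} (hm : ∀ x ∈ m, x ∈ P.simples) :
    P.IsWordOf P.simples m (wpr m) := ⟨hm, rfl⟩

lemma word_reverse {m : List V} {u : V ≃ₗ[ℝ] V} (h : P.IsWordOf P.simples m u) :
    P.IsWordOf P.simples m.reverse u⁻¹ := by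
  refine ⟨fun x hx => h.1 x (List.mem_reverse.mp hx), ?_⟩
  rw [wpr_eq_prod, wpr_reverse]
  rw [← h.2, wpr_eq_prod]

lemma length_inv_le {u : V ≃ₗ[ℝ] V} (h : ∃ m, P.IsWordOf P.simples m u) :
    P.length u⁻¹ ≤ P.length u := by
  obtain ⟨m, hm⟩ := h
  have hne : {n | ∃ l, P.IsWordOf P.simples l u ∧ l.length = n}.Nonempty :=
    ⟨m.length, m, hm, rfl⟩
  obtain ⟨l₀, hl₀, hlen⟩ := Nat.sInf_mem hne
  calc P.length u⁻¹ ≤ l₀.reverse.length := length_le_word P (word_reverse P hl₀)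
    _ = P.length u := by rw [List.length_reverse]; exact hlen

lemma length_inv_eq {u : V ≃ₗ[ℝ] V} (h : ∃ m, P.IsWordOf P.simples m u) :
    P.length u⁻¹ = P.length u := by
  obtain ⟨m, hm⟩ := h
  refine le_antisymm (length_inv_le P ⟨m, hm⟩) ?_
  have := length_inv_le P ⟨m.reverse, word_reverse P hm⟩
  rwa [inv_inv] at this

lemma prefpos {m : List V} (hms : ∀ x ∈ m, x ∈ P.simples)
    (hred : P.length (wpr m) = m.length) {i : ℕ} (hi : i < m.length) :
    wpr (m.take i) (m[i]'hi) ∈ P.Pos := by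
  have hsimp : m[i]'hi ∈ P.simples := hms _ (List.getElem_mem hi)
  have hpos : m[i]'hi ∈ P.Pos := ⟨P.simples_subset hsimp, posComb_single P hsimp⟩
  have htk : ∀ x ∈ m.take i, x ∈ P.simples := fun x hx => hms x (List.take_subset i m hx)
  have hroot : wpr (m.take i) (m[i]'hi) ∈ P.roots :=
    wpr_roots P (fun x hx => P.simples_subset (htk x hx)) hpos.1
  rcases root_pos_or_neg' P hroot with h | h
  · exact h
  exfalso
  obtain ⟨j, hj, he⟩ := exch P (m.take i) htk _ hpos h
  have hjlen : (m.take i).length = i := by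
    rw [List.length_take]; omega
  have hdec : wpr m = wpr ((m.take i).eraseIdx j ++ m.drop (i+1)) := by
    conv_lhs => rw [← List.take_append_drop i m]
    rw [wpr_append, List.drop_eq_getElem_cons hi, wpr_cons, ← mul_assoc, he, wpr_append]
  have hword : P.IsWordOf P.simples ((m.take i).eraseIdx j ++ m.drop (i+1)) (wpr m) := by
    refine ⟨?_, by rw [wpr_eq_prod, hdec]⟩
    intro x hx
    rcases List.mem_append.mp hx with hx | hx
    · exact htk x (List.eraseIdx_subset hx)
    · exact hms x (List.drop_subset (i+1) m hx)
  have hlen := length_le_word P hword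
  rw [hred, List.length_append, List.length_eraseIdx, List.length_drop] at hlen
  rw [hjlen] at hj hlen
  simp only [if_pos hj] at hlen
  omega

end Lengths

section CpairBounds

lemma inner_self_pos' {x : V} (h : x ≠ 0) : (0:ℝ) < ⟪x, x⟫ :=
  lt_of_le_of_ne real_inner_self_nonneg (Ne.symm (inner_self_ne_zero.mpr h))

lemma cpair_le_two {x y : V} (hq : ⟪x, x⟫ = ⟪y, y⟫) (h0 : y ≠ 0) : cpair x y ≤ 2 := by
  have hqy : (0:ℝ) < ⟪y, y⟫ := inner_self_pos' h0
  have hs : (0:ℝ) ≤ ⟪x - y, x - y⟫ := real_inner_self_nonneg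
  rw [inner_sub_left, inner_sub_right, inner_sub_right] at hs
  have hxy : ⟪y, x⟫ = ⟪x, y⟫ := real_inner_comm x y
  rw [cpair_def, div_le_iff₀ hqy]
  linarith

lemma neg_two_le_cpair {x y : V} (hq : ⟪x, x⟫ = ⟪y, y⟫) (h0 : y ≠ 0) : -2 ≤ cpair x y := by
  have hqy : (0:ℝ) < ⟪y, y⟫ := inner_self_pos' h0
  have hs : (0:ℝ) ≤ ⟪x + y, x + y⟫ := real_inner_self_nonneg
  rw [inner_add_left, inner_add_right, inner_add_right] at hs
  have hxy : ⟪y, x⟫ = ⟪x, y⟫ := real_inner_comm x y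
  rw [cpair_def, le_div_iff₀ hqy]
  linarith

lemma eq_of_cpair_eq_two {x y : V} (hq : ⟪x, x⟫ = ⟪y, y⟫) (h0 : y ≠ 0)
    (h : cpair x y = 2) : x = y := by
  have hqy : (0:ℝ) < ⟪y, y⟫ := inner_self_pos' h0
  rw [cpair_def, div_eq_iff (ne_of_gt hqy)] at h
  have hxy : ⟪y, x⟫ = ⟪x, y⟫ := real_inner_comm x y
  have hs : ⟪x - y, x - y⟫ = 0 := by
    rw [inner_sub_left, inner_sub_right, inner_sub_right]
    linarith
  have := inner_self_eq_zero.mp hs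
  rwa [sub_eq_zero] at this

lemma eq_neg_of_cpair_eq_neg_two {x y : V} (hq : ⟪x, x⟫ = ⟪y, y⟫) (h0 : y ≠ 0)
    (h : cpair x y = -2) : x = -y := by
  have hqy : (0:ℝ) < ⟪y, y⟫ := inner_self_pos' h0
  rw [cpair_def, div_eq_iff (ne_of_gt hqy)] at h
  have hxy : ⟪y, x⟫ = ⟪x, y⟫ := real_inner_comm x y
  have hs : ⟪x + y, x + y⟫ = 0 := by
    rw [inner_add_left, inner_add_right, inner_add_right]
    linarith
  have := inner_self_eq_zero.mp hs
  rwa [add_eq_zero_iff_eq_neg] at this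

lemma cpair_neg_right (x y : V) : cpair x (-y) = - cpair x y := by
  rw [cpair_def, cpair_def, inner_neg_right, inner_neg_neg]
  ring

end CpairBounds

section Subsystem

variable [DecidableEq V] (P : RootSystemData V)

lemma wpr_posOf (hSL : P.SimplyLaced) {l : List V} (hls : ∀ x ∈ l, x ∈ P.simples)
    {I : Finset V} (hI : I ⊆ P.simples) (hWI : ∀ γ ∈ I, wpr l γ ∈ P.Pos) :
    ∀ γ ∈ P.PosOf I, wpr l γ ∈ P.Pos := by
  have hlr : ∀ x ∈ l, x ∈ P.roots := fun x hx => P.simples_subset (hls x hx)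
  suffices h : ∀ n : ℕ, ∀ γ, γ ∈ P.roots → ∀ c : V → ℕ,
      γ = ∑ δ ∈ I, (c δ : ℝ) • δ → ∑ δ ∈ I, c δ = n → wpr l γ ∈ P.Pos by
    rintro γ ⟨hγr, c, hc⟩
    exact h _ γ hγr c hc rfl
  intro n
  induction n using Nat.strong_induction_on with
  | _ n ih =>
    intro γ hγr c hc hsum
    have hq : (0:ℝ) < ⟪γ, γ⟫ := inner_self_pos' (P.root_ne_zero γ hγr)
    have he : ⟪γ, γ⟫ = ∑ δ ∈ I, (c δ : ℝ) * ⟪γ, δ⟫ := by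
      nth_rewrite 2 [hc]
      rw [inner_sum]
      exact Finset.sum_congr rfl (fun δ _ => real_inner_smul_right γ δ _)
    have hex : ∃ δ₀ ∈ I, 0 < (c δ₀ : ℝ) * ⟪γ, δ₀⟫ := by
      by_contra hcon
      push_neg at hcon
      have := Finset.sum_nonpos hcon
      rw [← he] at this
      linarith
    obtain ⟨δ₀, hδ₀I, hδ₀⟩ := hex
    have hδ₀s : δ₀ ∈ P.simples := hI hδ₀I
    have hδ₀r : δ₀ ∈ P.roots := P.simples_subset hδ₀s
    have hcδ₀ : 0 < c δ₀ ∧ (0:ℝ) < ⟪γ, δ₀⟫ := by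
      rcases mul_pos_iff.mp hδ₀ with ⟨h1, h2⟩ | ⟨h1, _⟩
      · exact ⟨by exact_mod_cast h1, h2⟩
      · exact absurd (Nat.cast_nonneg (c δ₀)) (not_le.mpr h1)
    by_cases hγδ : γ = δ₀
    · rw [hγδ]
      exact hWI δ₀ hδ₀I
    · obtain ⟨nn, hnn⟩ := P.pairing_int γ hγr δ₀ hδ₀r
      have hq0 : (0:ℝ) < ⟪δ₀, δ₀⟫ := inner_self_pos' (P.root_ne_zero δ₀ hδ₀r)
      have hqeq : ⟪γ, γ⟫ = ⟪δ₀, δ₀⟫ := hSL γ hγr δ₀ hδ₀r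
      have hnpos : 0 < nn := by
        have : (0:ℝ) < (nn : ℝ) := by
          rw [hnn, cpair_def]
          exact div_pos (by linarith [hcδ₀.2]) hq0
        exact_mod_cast this
      have hn2 : nn ≠ 2 := by
        intro h2
        apply hγδ
        apply eq_of_cpair_eq_two hqeq (P.root_ne_zero δ₀ hδ₀r)
        rw [← hnn, h2]; norm_num
      have hle2 : nn ≤ 2 := by
        have := cpair_le_two hqeq (P.root_ne_zero δ₀ hδ₀r)
        rw [← hnn] at this
        exact_mod_cast this
      have hn1 : nn = 1 := by omega
      have hγ'r : γ - δ₀ ∈ P.roots := by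
        have := P.reflect_mem δ₀ hδ₀r γ hγr
        rwa [reflVec_apply', ← hnn, hn1, Int.cast_one, one_smul] at this
      set c' : V → ℕ := fun x => if x = δ₀ then c δ₀ - 1 else c x with hc'def
      have hkey : ∀ δ ∈ I, (c' δ : ℝ) • δ = (c δ : ℝ) • δ - (if δ = δ₀ then (1:ℝ) else 0) • δ := by
        intro δ _
        by_cases hd : δ = δ₀
        · subst hd
          have h1 : c' δ = c δ - 1 := by simp [hc'def]
          rw [h1, if_pos rfl, Nat.cast_sub hcδ₀.1, Nat.cast_one, sub_smul, one_smul]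
        · have h1 : c' δ = c δ := by simp [hc'def, hd]
          rw [h1, if_neg hd, zero_smul, sub_zero]
      have hc' : γ - δ₀ = ∑ δ ∈ I, (c' δ : ℝ) • δ := by
        rw [Finset.sum_congr rfl hkey, Finset.sum_sub_distrib, ← hc]
        simp only [ite_smul, zero_smul]
        rw [Finset.sum_ite_eq' I δ₀ (fun δ => (1:ℝ) • δ), if_pos hδ₀I, one_smul]
      have hsum' : ∑ δ ∈ I, c' δ + 1 = n := by
        rw [← hsum]
        have : ∀ δ ∈ I, c δ = c' δ + (if δ = δ₀ then 1 else 0) := by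
          intro δ _
          by_cases hd : δ = δ₀
          · subst hd
            have h1 : c' δ = c δ - 1 := by simp [hc'def]
            rw [h1, if_pos rfl]
            omega
          · have h1 : c' δ = c δ := by simp [hc'def, hd]
            rw [h1, if_neg hd]
            omega
        rw [Finset.sum_congr rfl this, Finset.sum_add_distrib, Finset.sum_ite_eq' I δ₀ (fun _ => 1),
          if_pos hδ₀I]
      have hprev := ih (∑ δ ∈ I, c' δ) (by omega) (γ - δ₀) hγ'r c' hc' rfl
      have hwδ := hWI δ₀ hδ₀I
      have hre : wpr l γ = wpr l (γ - δ₀) + wpr l δ₀ := by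
        rw [← map_add]
        congr 1
        abel
      refine ⟨wpr_roots P hlr hγr, ?_⟩
      rw [hre]
      exact posComb_add P hprev.2 hwδ.2

end Subsystem

section Minuscule

variable [DecidableEq V] (P : RootSystemData V)

lemma linv_apply (u : V ≃ₗ[ℝ] V) (x : V) : (u⁻¹ : V ≃ₗ[ℝ] V) (u x) = x :=
  u.symm_apply_apply x

lemma apply_inv (u : V ≃ₗ[ℝ] V) (x : V) : u ((u⁻¹ : V ≃ₗ[ℝ] V) x) = x :=
  u.apply_symm_apply x

variable {α ϖ : V}

lemma inner_ϖ_simple (hSL : P.SimplyLaced) (hα : α ∈ P.simples)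
    (hfw : P.IsFundamentalWeight α ϖ) (δ : V) (hδ : δ ∈ P.simples) :
    ⟪ϖ, δ⟫ = if δ = α then ⟪α, α⟫ / 2 else 0 := by
  have hαr : α ∈ P.roots := P.simples_subset hα
  have hδr : δ ∈ P.roots := P.simples_subset hδ
  have hq : ⟪δ, δ⟫ = ⟪α, α⟫ := hSL δ hδr α hαr
  have hq0 : (0:ℝ) < ⟪α, α⟫ := inner_self_pos' (P.root_ne_zero α hαr)
  by_cases h : δ = α
  · subst h
    have h1 : cpair ϖ δ = 1 := hfw.1
    rw [cpair_def] at h1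
    rw [if_pos rfl]
    field_simp at h1
    linarith
  · have h1 : cpair ϖ δ = 0 := hfw.2 δ hδ h
    rw [cpair_def, hq, div_eq_zero_iff] at h1
    rw [if_neg h]
    rcases h1 with h1 | h1
    · linarith
    · linarith

lemma cpair_ϖ_root (hSL : P.SimplyLaced) (hα : α ∈ P.simples)
    (hfw : P.IsFundamentalWeight α ϖ) {ε : V} (hε : ε ∈ P.roots) {c : V → ℕ}
    (hc : ε = ∑ δ ∈ P.simples, (c δ : ℝ) • δ) : cpair ϖ ε = c α := by
  have hαr : α ∈ P.roots := P.simples_subset hα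
  have hq0 : (0:ℝ) < ⟪α, α⟫ := inner_self_pos' (P.root_ne_zero α hαr)
  have hqe : ⟪ε, ε⟫ = ⟪α, α⟫ := hSL ε hε α hαr
  have hi : ⟪ϖ, ε⟫ = (c α : ℝ) * (⟪α, α⟫ / 2) := by
    nth_rewrite 1 [hc]
    rw [inner_sum]
    have : ∀ δ ∈ P.simples, ⟪ϖ, (c δ : ℝ) • δ⟫
        = if δ = α then (c δ : ℝ) * (⟪α, α⟫ / 2) else 0 := by
      intro δ hδ
      rw [real_inner_smul_right, inner_ϖ_simple P hSL hα hfw δ hδ]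
      by_cases h : δ = α <;> simp [h]
    rw [Finset.sum_congr rfl this,
      Finset.sum_ite_eq' P.simples α (fun δ => (c δ : ℝ) * (⟪α, α⟫ / 2)), if_pos hα]
  rw [cpair_def, hqe, hi]
  field_simp

lemma cpair_ϖ_pos (hSL : P.SimplyLaced) (hα : α ∈ P.simples)
    (hfw : P.IsFundamentalWeight α ϖ) (hmin : P.IsMinusculeWeight ϖ) {x : V} (hx : x ∈ P.Pos) : 0 ≤ cpair ϖ x ∧ cpair ϖ x ≤ 1 := by
  obtain ⟨hr, c, hc⟩ := hx
  have h1 := cpair_ϖ_root P hSL hα hfw hr hc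
  constructor
  · rw [h1]; exact Nat.cast_nonneg _
  · exact hmin x ⟨hr, c, hc⟩

lemma cpair_ϖ_bound (hSL : P.SimplyLaced) (hα : α ∈ P.simples)
    (hfw : P.IsFundamentalWeight α ϖ) (hmin : P.IsMinusculeWeight ϖ) {x : V} (hx : x ∈ P.roots) : -1 ≤ cpair ϖ x ∧ cpair ϖ x ≤ 1 := by
  rcases root_pos_or_neg' P hx with h | h
  · have := cpair_ϖ_pos P hSL hα hfw hmin h
    exact ⟨by linarith [this.1], this.2⟩
  · have := cpair_ϖ_pos P hSL hα hfw hmin h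
    have hneg : cpair ϖ x = - cpair ϖ (-x) := by
      rw [cpair_neg_right, neg_neg]
    rw [hneg]
    exact ⟨by linarith [this.2], by linarith [this.1]⟩

end Minuscule

lemma getElem_congr' {β : Type*} (L : List β) {i j : ℕ} (h : i = j) (hi : i < L.length) :
    L[i]'hi = L[j]'(h ▸ hi) := by subst h; rfl

/-- With `v_i := s_{β_i} ⋯ s_{β_1}` and `γ_i := v_i(β_1)` for a reduced
decomposition `w = s_{β_1} ⋯ s_{β_r}` of a minimal coset representative `w` in the
minuscule situation, each `γ_i` is a negative root and `γ_{i+1} ≤ γ_i`. -/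
theorem gamma_neg_and_antitone [DecidableEq V] (P : RootSystemData V)
    (hSL : P.SimplyLaced) (hirr : P.Irred)
    (α : V) (hα : α ∈ P.simples) (ϖ : V)
    (hfw : P.IsFundamentalWeight α ϖ) (hmin : P.IsMinusculeWeight ϖ)
    (w : V ≃ₗ[ℝ] V) (hw : w ∈ P.Weyl)
    (hWI : ∀ γ ∈ P.simples.erase α, w γ ∈ P.Pos)
    (l : List V) (hl : P.IsReducedWord l w) (hne : l ≠ []) :
    (∀ i : ℕ, 1 ≤ i → i ≤ l.length →
      (((l.take i).reverse.map reflVec).prod) (l.head hne) ∈ P.Neg) ∧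
    (∀ i : ℕ, 1 ≤ i → i + 1 ≤ l.length →
      P.rootLE ((((l.take (i + 1)).reverse.map reflVec).prod) (l.head hne))
               ((((l.take i).reverse.map reflVec).prod) (l.head hne))) := by
  obtain ⟨⟨hls, hwl⟩, hlen⟩ := hl
  have hwl' : wpr l = w := hwl
  have hlr : ∀ x ∈ l, x ∈ P.roots := fun x hx => P.simples_subset (hls x hx)
  have hαr : α ∈ P.roots := P.simples_subset hα
  have hq0 : (0:ℝ) < ⟪α, α⟫ := inner_self_pos' (P.root_ne_zero α hαr)
  have hnorm : ∀ x ∈ P.roots, ⟪x, x⟫ = ⟪α, α⟫ := fun x hx => hSL x hx α hαr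
  have hred : P.length (wpr l) = l.length := by rw [hwl']; exact hlen.symm
  have hrevls : ∀ x ∈ l.reverse, x ∈ P.simples := fun x hx => hls x (List.mem_reverse.mp hx)
  have hrevred : P.length (wpr l.reverse) = l.reverse.length := by
    rw [wpr_reverse, List.length_reverse, length_inv_eq P ⟨l, word_wpr P hls⟩]
    exact hred
  have hl0 : 0 < l.length := List.length_pos_iff.mpr hne
  have hhead : l.head hne = l[0]'hl0 := List.head_eq_getElem hne
  -- prefixes of reduced words are reduced
  have hpref : ∀ i : ℕ, i ≤ l.length → P.length (wpr (l.take i)) = i := by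
    intro i hi
    have htk : ∀ x ∈ l.take i, x ∈ P.simples := fun x hx => hls x (List.take_subset i l hx)
    have hle : P.length (wpr (l.take i)) ≤ i := by
      have := length_le_word P (word_wpr P htk)
      rw [List.length_take] at this
      omega
    by_contra hne2
    have hS : {n | ∃ m, P.IsWordOf P.simples m (wpr (l.take i)) ∧ m.length = n}.Nonempty :=
      ⟨(l.take i).length, l.take i, word_wpr P htk, rfl⟩
    obtain ⟨m₀, hm₀, hm₀len⟩ := Nat.sInf_mem hS
    have hm₀len' : m₀.length = P.length (wpr (l.take i)) := hm₀len
    have hword : P.IsWordOf P.simples (m₀ ++ l.drop i) (wpr l) := by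
      refine ⟨?_, ?_⟩
      · intro x hx
        rcases List.mem_append.mp hx with hx | hx
        · exact hm₀.1 x hx
        · exact hls x (List.drop_subset i l hx)
      · show wpr (m₀ ++ l.drop i) = wpr l
        rw [wpr_append]
        have hm2 : wpr m₀ = wpr (l.take i) := hm₀.2
        rw [hm2]
        conv_rhs => rw [← List.take_append_drop i l]
        rw [wpr_append]
    have hle2 := length_le_word P hword
    rw [hred, List.length_append, List.length_drop] at hle2
    omega
  -- positivity of partial products applied to letters
  have hδpos : ∀ k : ℕ, (hk : k < l.length) → wpr (l.take k) (l[k]'hk) ∈ P.Pos :=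
    fun k hk => prefpos P hls hred hk
  have hεpos : ∀ k : ℕ, (hk : k < l.length) →
      wpr ((l.drop (k+1)).reverse) (l[k]'hk) ∈ P.Pos := by
    intro k hk
    have hj : l.length - 1 - k < l.reverse.length := by rw [List.length_reverse]; omega
    have h1 := prefpos P hrevls hrevred hj
    have hidx : l.length - (l.length - 1 - k) = k + 1 := by omega
    have hlist : l.reverse.take (l.length - 1 - k) = (l.drop (k+1)).reverse := by
      rw [List.take_reverse, hidx]
    have hget : l.reverse[l.length - 1 - k]'hj = l[k]'hk := by
      rw [List.getElem_reverse]
      exact getElem_congr' l (by omega) _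
    rw [hlist, hget] at h1
    exact h1
  -- w⁻¹ sends the inversion roots to negatives of the ε's
  have hinv : ∀ k : ℕ, (hk : k < l.length) →
      (wpr l)⁻¹ (wpr (l.take k) (l[k]'hk)) = -(wpr ((l.drop (k+1)).reverse) (l[k]'hk)) := by
    intro k hk
    have hsplit : wpr l = wpr (l.take k) * (reflVec (l[k]'hk) * wpr (l.drop (k+1))) := by
      conv_lhs => rw [← List.take_append_drop k l]
      rw [wpr_append, List.drop_eq_getElem_cons hk, wpr_cons]
    rw [hsplit, mul_inv_rev, mul_inv_rev, reflVec_inv, mulApply, mulApply, linv_apply,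
      reflVec_self _ (P.root_ne_zero _ (hlr _ (List.getElem_mem hk))), map_neg,
      wpr_reverse (l.drop (k+1))]
  -- every inversion-ε pairs with ϖ by exactly 1
  have hcp1 : ∀ k : ℕ, (hk : k < l.length) →
      cpair ϖ (wpr ((l.drop (k+1)).reverse) (l[k]'hk)) = 1 := by
    intro k hk
    obtain ⟨hεr, c, hcε⟩ := hεpos k hk
    have hca := cpair_ϖ_root P hSL hα hfw hεr hcε
    have hupper : (c α : ℝ) ≤ 1 := by
      rw [← hca]
      exact hmin _ ⟨hεr, c, hcε⟩
    have hlower : c α ≠ 0 := by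
      intro hc0
      have hPosOf : wpr ((l.drop (k+1)).reverse) (l[k]'hk) ∈ P.PosOf (P.simples.erase α) := by
        refine ⟨hεr, c, ?_⟩
        rw [hcε]
        exact (Finset.sum_erase _ (by rw [hc0]; simp)).symm
      have hWI' : ∀ γ ∈ P.simples.erase α, wpr l γ ∈ P.Pos := by
        intro γ hγ
        rw [hwl']
        exact hWI γ hγ
      have hwε := wpr_posOf P hSL hls (Finset.erase_subset α P.simples) hWI' _ hPosOf
      have h2 := congrArg (wpr l) (hinv k hk)
      rw [apply_inv, map_neg] at h2
      have hδk := hδpos k hk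
      rw [h2] at hδk
      exact not_pos_and_neg P hwε hδk
    have h1le : (1:ℝ) ≤ (c α : ℝ) := by exact_mod_cast Nat.one_le_iff_ne_zero.mpr hlower
    rw [hca]
    linarith
  constructor
  · -- Part 1 : each γ_i is a negative root
    intro i h1i hir
    have hi0 : i - 1 < ((l.take i).reverse).length := by
      rw [List.length_reverse, List.length_take]; omega
    have htkrev : ∀ x ∈ (l.take i).reverse, x ∈ P.simples := fun x hx =>
      hls x (List.take_subset i l (List.mem_reverse.mp hx))
    have hmred : P.length (wpr ((l.take i).reverse)) = ((l.take i).reverse).length := by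
      rw [wpr_reverse, List.length_reverse, List.length_take,
        length_inv_eq P ⟨l.take i, word_wpr P (fun x hx => hls x (List.take_subset i l hx))⟩,
        hpref i hir]
      omega
    have P1 := prefpos P htkrev hmred hi0
    have hget : ((l.take i).reverse)[i-1]'hi0 = l[0]'hl0 := by
      rw [List.getElem_reverse]
      have h2 : (l.take i).length - 1 - (i - 1) = 0 := by rw [List.length_take]; omega
      rw [getElem_congr' (l.take i) h2]
      exact List.getElem_take
    have hdecomp : (l.take i).reverse
        = ((l.take i).reverse).take (i-1) ++ [l[0]'hl0] := by
      conv_lhs => rw [← List.take_append_drop (i-1) ((l.take i).reverse)]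
      congr 1
      rw [List.drop_eq_getElem_cons hi0, hget]
      congr 1
      apply List.drop_eq_nil_of_le
      rw [List.length_reverse, List.length_take]
      omega
    show wpr ((l.take i).reverse) (l.head hne) ∈ P.Neg
    have hval : wpr ((l.take i).reverse) (l.head hne)
        = -(wpr (((l.take i).reverse).take (i-1)) (l[0]'hl0)) := by
      conv_lhs => rw [hhead, hdecomp]
      rw [wpr_append, wpr_singleton, mulApply,
        reflVec_self _ (P.root_ne_zero _ (hlr _ (List.getElem_mem hl0))), map_neg]
    show -(wpr ((l.take i).reverse) (l.head hne)) ∈ P.Pos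
    rw [hval, neg_neg]
    rw [hget] at P1
    exact P1
  · -- Part 2 : the γ_i decrease
    intro i h1i hir
    have hi : i < l.length := by omega
    have hbs : l[i]'hi ∈ P.simples := hls _ (List.getElem_mem hi)
    have hbr : l[i]'hi ∈ P.roots := P.simples_subset hbs
    have hδr : wpr (l.take i) (l[i]'hi) ∈ P.roots := (hδpos i hi).1
    have h0s : l[0]'hl0 ∈ P.simples := hls _ (List.getElem_mem hl0)
    have h0r : l[0]'hl0 ∈ P.roots := P.simples_subset h0s
    obtain ⟨n, hn⟩ := P.pairing_int (l[0]'hl0) h0r (wpr (l.take i) (l[i]'hi)) hδr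
    have hsucc : (l.take (i+1)).reverse = (l[i]'hi) :: (l.take i).reverse := by
      rw [List.take_succ, List.getElem?_eq_getElem hi]
      simp
    have hγ1 : wpr ((l.take (i+1)).reverse) (l.head hne)
        = wpr ((l.take i).reverse) (l.head hne)
          - cpair (wpr ((l.take i).reverse) (l.head hne)) (l[i]'hi) • (l[i]'hi) := by
      rw [hsucc, wpr_cons, mulApply, reflVec_apply']
    have hc2 : cpair (wpr ((l.take i).reverse) (l.head hne)) (l[i]'hi) = (n:ℝ) := by
      rw [hn, cpair_def, cpair_def]
      have hip : ⟪wpr ((l.take i).reverse) (l.head hne), l[i]'hi⟫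
          = ⟪l[0]'hl0, wpr (l.take i) (l[i]'hi)⟫ := by
        rw [hhead, wpr_reverse,
          ← inner_wpr (l.take i) ((wpr (l.take i))⁻¹ (l[0]'hl0)) (l[i]'hi), apply_inv]
      rw [hip, hnorm _ hbr, hnorm _ hδr]
    have hn0 : 0 ≤ n := by
      by_contra hneg
      push_neg at hneg
      have hqδ : ⟪l[0]'hl0, l[0]'hl0⟫
          = ⟪wpr (l.take i) (l[i]'hi), wpr (l.take i) (l[i]'hi)⟫ := by
        rw [hnorm _ h0r, hnorm _ hδr]
      have hδne : wpr (l.take i) (l[i]'hi) ≠ 0 := P.root_ne_zero _ hδr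
      have hge := neg_two_le_cpair hqδ hδne
      rw [← hn] at hge
      have hge' : (-2:ℤ) ≤ n := by exact_mod_cast hge
      rcases (by omega : n = -2 ∨ n = -1) with h2 | h2
      · have heq := eq_neg_of_cpair_eq_neg_two hqδ hδne (by rw [← hn, h2]; norm_num)
        have h0pos : l[0]'hl0 ∈ P.Pos := ⟨h0r, posComb_single P h0s⟩
        apply not_pos_and_neg P (hδpos i hi)
        show -(wpr (l.take i) (l[i]'hi)) ∈ P.Pos
        rw [← heq]
        exact h0pos
      · -- n = -1 : the sum of the two inversion roots gives pairing -2 with w ϖ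
        have hsym : cpair (wpr (l.take i) (l[i]'hi)) (l[0]'hl0) = (n:ℝ) := by
          rw [hn, cpair_def, cpair_def, real_inner_comm (l[0]'hl0) (wpr (l.take i) (l[i]'hi)),
            hnorm _ h0r, hnorm _ hδr]
        have hθr : wpr (l.take i) (l[i]'hi) + l[0]'hl0 ∈ P.roots := by
          have := P.reflect_mem _ h0r _ hδr
          rwa [reflVec_apply', hsym, h2, Int.cast_neg, Int.cast_one, neg_smul, one_smul,
            sub_neg_eq_add] at this
        have hinv0 := hinv 0 hl0
        rw [List.take_zero, wpr_nil] at hinv0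
        have hone : (1 : V ≃ₗ[ℝ] V) (l[0]'hl0) = l[0]'hl0 := rfl
        rw [hone] at hinv0
        have hinvi := hinv i hi
        have hx : (wpr l)⁻¹ (wpr (l.take i) (l[i]'hi) + l[0]'hl0)
            = -(wpr ((l.drop (i+1)).reverse) (l[i]'hi) + wpr ((l.drop (0+1)).reverse) (l[0]'hl0)) := by
          rw [map_add, hinvi, hinv0]
          abel
        have hxr : (wpr l)⁻¹ (wpr (l.take i) (l[i]'hi) + l[0]'hl0) ∈ P.roots := by
          rw [← wpr_reverse]
          exact wpr_roots P (fun x hx => P.simples_subset (hrevls x hx)) hθr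
        have hbd := (cpair_ϖ_bound P hSL hα hfw hmin hxr).1
        have hε0r : wpr ((l.drop (0+1)).reverse) (l[0]'hl0) ∈ P.roots := (hεpos 0 hl0).1
        have hεir : wpr ((l.drop (i+1)).reverse) (l[i]'hi) ∈ P.roots := (hεpos i hi).1
        have hcp0 := hcp1 0 hl0
        have hcpi := hcp1 i hi
        have hip0 : ⟪ϖ, wpr ((l.drop (0+1)).reverse) (l[0]'hl0)⟫ = ⟪α,α⟫/2 := by
          rw [cpair_def, hnorm _ hε0r, div_eq_iff (ne_of_gt hq0)] at hcp0
          linarith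
        have hipi : ⟪ϖ, wpr ((l.drop (i+1)).reverse) (l[i]'hi)⟫ = ⟪α,α⟫/2 := by
          rw [cpair_def, hnorm _ hεir, div_eq_iff (ne_of_gt hq0)] at hcpi
          linarith
        have hfinal : cpair ϖ ((wpr l)⁻¹ (wpr (l.take i) (l[i]'hi) + l[0]'hl0)) = -2 := by
          rw [cpair_def, hnorm _ hxr, hx, inner_neg_right, inner_add_right, hipi, hip0]
          field_simp
          norm_num
        rw [hfinal] at hbd
        linarith
    show P.IsPosComb (wpr ((l.take i).reverse) (l.head hne)
      - wpr ((l.take (i+1)).reverse) (l.head hne))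
    rw [hγ1, hc2]
    have hsub : wpr ((l.take i).reverse) (l.head hne)
        - (wpr ((l.take i).reverse) (l.head hne) - (n:ℝ) • (l[i]'hi))
        = (n:ℝ) • (l[i]'hi) := by abel
    rw [hsub]
    have hcast : ((n.toNat : ℕ) : ℝ) = (n:ℝ) := by exact_mod_cast Int.toNat_of_nonneg hn0
    rw [← hcast]
    exact posComb_nsmul P n.toNat hbs
end
end

section
/- Let $R$ be an irreducible simply-laced root system, $\alpha$ a simple root with minuscule fundamental weight $\varpi_\alpha$, $I = S \setminus \{\alpha\}$, and $w \in W$ with $w(I)\subseteq R^+$. Suppose $\beta$ is the unique simple root with $w^{-1}(\beta) \in R^-$ (i.e. $R^+(w^{-1}) \cap S = \{\beta\}$). Then the support of $w$ (the set of simple roots whose reflections occur in some, equivalently any, reduced decomposition of $w$) equals the support of the root $-w^{-1}(\beta)$ (the set of simple roots occurring with nonzero coefficient in $-w^{-1}(\beta)$). -/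
open scoped RealInnerProductSpace

noncomputable section

variable {V : Type} [NormedAddCommGroup V] [InnerProductSpace ℝ V]

set_option linter.unusedVariables false
set_option linter.unusedSectionVars false

namespace RootSystemData

section Basic

variable [DecidableEq V]

lemma reflVec_apply (γ x : V) : reflVec γ x = x - (2 * ⟪x, γ⟫ / ⟪γ, γ⟫) • γ := rfl

lemma reflVec_apply' (γ x : V) : reflVec γ x = x - cpair x γ • γ := rfl

lemma reflVec_symm (γ : V) : (reflVec γ).symm = reflVec γ := rfl

lemma reflVec_inv (γ : V) : (reflVec γ)⁻¹ = reflVec γ := rfl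

lemma reflVec_mul_self (γ : V) : reflVec γ * reflVec γ = 1 := by
  ext x
  exact (reflVec γ).left_inv x

lemma inner_reflVec (γ x y : V) : ⟪reflVec γ x, reflVec γ y⟫ = ⟪x, y⟫ := by
  by_cases h : (⟪γ, γ⟫ : ℝ) = 0
  · have h0 : γ = 0 := inner_self_eq_zero.mp h
    simp [reflVec_apply, h0]
  · simp only [reflVec_apply, inner_sub_left, inner_sub_right, real_inner_smul_left,
      real_inner_smul_right]
    rw [real_inner_comm γ x, real_inner_comm γ y]
    field_simp
    ring

lemma reflVec_self (γ : V) (h : (⟪γ, γ⟫ : ℝ) ≠ 0) : reflVec γ γ = -γ := by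
  rw [reflVec_apply]
  have h2 : 2 * ⟪γ, γ⟫ / ⟪γ, γ⟫ = 2 := by field_simp
  rw [h2, two_smul]
  abel

end Basic

end RootSystemData
namespace RootSystemData

section Reps

variable [DecidableEq V] (P : RootSystemData V)

/-- Uniqueness of real coefficients over the simple roots. -/
lemma rep_unique {a b : V → ℝ}
    (h : ∑ δ ∈ P.simples, a δ • δ = ∑ δ ∈ P.simples, b δ • δ) :
    ∀ δ ∈ P.simples, a δ = b δ := by
  intro δ hδ
  have hli := linearIndependent_iff'.mp P.simples_indep P.simples.attach
    (fun i => a (i : V) - b (i : V)) ?_ ⟨δ, hδ⟩ (P.simples.mem_attach _)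
  · simp only at hli
    linarith
  · have : ∑ i ∈ P.simples.attach, (a (i : V) - b (i : V)) • (i : V)
        = ∑ δ ∈ P.simples, (a δ - b δ) • δ :=
      P.simples.sum_attach (fun x => (a x - b x) • x)
    rw [this]
    simp only [sub_smul, Finset.sum_sub_distrib, h, sub_self]

lemma isPosComb_zero : P.IsPosComb 0 :=
  ⟨fun _ => 0, by simp⟩

lemma isPosComb_add {x y : V} (hx : P.IsPosComb x) (hy : P.IsPosComb y) :
    P.IsPosComb (x + y) := by
  obtain ⟨a, ha⟩ := hx
  obtain ⟨b, hb⟩ := hy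
  exact ⟨a + b, by simp [ha, hb, add_smul, Finset.sum_add_distrib]⟩

lemma isPosComb_nsmul {x : V} (n : ℕ) (hx : P.IsPosComb x) :
    P.IsPosComb ((n : ℝ) • x) := by
  obtain ⟨a, ha⟩ := hx
  refine ⟨fun δ => n * a δ, ?_⟩
  rw [ha, Finset.smul_sum]
  refine Finset.sum_congr rfl fun δ _ => ?_
  rw [smul_smul]
  push_cast
  ring_nf

/-- A sum of nonneg-integer multiples of positive combinations is a positive combination. -/
lemma isPosComb_sum {ι : Type} [DecidableEq ι] (s : Finset ι) (f : ι → V) (n : ι → ℕ)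
    (h : ∀ i ∈ s, P.IsPosComb (f i)) :
    P.IsPosComb (∑ i ∈ s, (n i : ℝ) • f i) := by
  induction s using Finset.induction_on with
  | empty => simpa using P.isPosComb_zero
  | insert _ _ hni ih =>
    rw [Finset.sum_insert hni]
    exact P.isPosComb_add (P.isPosComb_nsmul _ (h _ (Finset.mem_insert_self _ _)))
      (ih fun i hi => h i (Finset.mem_insert_of_mem hi))

lemma simple_mem_pos {γ : V} (hγ : γ ∈ P.simples) : γ ∈ P.Pos := by
  refine ⟨P.simples_subset hγ, fun δ => if δ = γ then 1 else 0, ?_⟩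
  rw [Finset.sum_eq_single γ]
  · simp
  · intro δ _ hne; simp [hne]
  · intro h; exact absurd hγ h

lemma pos_root_ne_zero {x : V} (hx : x ∈ P.Pos) : x ≠ 0 := P.root_ne_zero x hx.1

lemma pos_neg_disjoint {x : V} (hx : x ∈ P.Pos) (hnx : x ∈ P.Neg) : False := by
  obtain ⟨hr, a, ha⟩ := hx
  obtain ⟨hr', b, hb⟩ := hnx
  have hsum : ∑ δ ∈ P.simples, ((a δ + b δ : ℕ) : ℝ) • δ
      = ∑ δ ∈ P.simples, (0 : ℝ) • δ := by
    push_cast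
    simp only [add_smul, Finset.sum_add_distrib, ← ha, ← hb]
    simp
  have hz := P.rep_unique hsum
  have hx0 : x = 0 := by
    rw [ha]
    refine Finset.sum_eq_zero fun δ hδ => ?_
    have := hz δ hδ
    have ha0 : (a δ : ℝ) = 0 := by
      have hb0 : (0:ℝ) ≤ (b δ : ℝ) := by positivity
      have ha0' : (0:ℝ) ≤ (a δ : ℝ) := by positivity
      push_cast at this
      linarith
    rw [ha0, zero_smul]
  exact P.root_ne_zero x hr hx0

lemma neg_mem_roots {x : V} (hx : x ∈ P.roots) : -x ∈ P.roots := by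
  have h0 : (⟪x, x⟫ : ℝ) ≠ 0 := by
    simp only [ne_eq, inner_self_eq_zero]
    exact P.root_ne_zero x hx
  have := P.reflect_mem x hx x hx
  rwa [reflVec_self x h0] at this

lemma root_pos_or_neg' {x : V} (hx : x ∈ P.roots) : x ∈ P.Pos ∨ x ∈ P.Neg := by
  rcases P.root_pos_or_neg x hx with ⟨a, ha⟩ | ⟨a, ha⟩
  · exact Or.inl ⟨hx, a, ha⟩
  · exact Or.inr ⟨P.neg_mem_roots hx, a, ha⟩

lemma mem_neg_iff {x : V} : x ∈ P.Neg ↔ -x ∈ P.Pos := Iff.rfl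

lemma not_pos_of_neg {x : V} (hx : x ∈ P.Neg) : x ∉ P.Pos :=
  fun h => P.pos_neg_disjoint h hx

end Reps

end RootSystemData
namespace RootSystemData

section Words

variable [DecidableEq V]

lemma mul_apply' (f g : V ≃ₗ[ℝ] V) (x : V) : (f * g) x = f (g x) := rfl

/-- Products of reflections in arbitrary lists preserve the inner product. -/
lemma prod_reflVec_inner (l : List V) (x y : V) :
    ⟪(l.map reflVec).prod x, (l.map reflVec).prod y⟫ = ⟪x, y⟫ := by
  induction l generalizing x y with
  | nil => simp
  | cons γ t ih =>
    simp only [List.map_cons, List.prod_cons, mul_apply']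
    rw [inner_reflVec]
    exact ih _ _

lemma prod_reverse_eq_inv (l : List V) :
    (l.reverse.map reflVec).prod = ((l.map reflVec).prod)⁻¹ := by
  induction l with
  | nil => simp
  | cons γ t ih =>
    simp only [List.reverse_cons, List.map_append, List.prod_append, List.map_cons,
      List.prod_cons, List.map_nil, List.prod_nil, mul_one, ih]
    rw [mul_inv_rev, reflVec_inv]

variable (P : RootSystemData V)

lemma word_nil : P.IsWordOf P.simples [] 1 := ⟨by simp, by simp⟩

lemma word_singleton {γ : V} (hγ : γ ∈ P.simples) :
    P.IsWordOf P.simples [γ] (reflVec γ) := ⟨by simpa using hγ, by simp⟩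

lemma word_append {l m : List V} {w u : V ≃ₗ[ℝ] V}
    (hl : P.IsWordOf P.simples l w) (hm : P.IsWordOf P.simples m u) :
    P.IsWordOf P.simples (l ++ m) (w * u) := by
  refine ⟨fun γ hγ => ?_, by rw [List.map_append, List.prod_append, hl.2, hm.2]⟩
  rcases List.mem_append.mp hγ with h | h
  · exact hl.1 γ h
  · exact hm.1 γ h

lemma word_reverse {l : List V} {w : V ≃ₗ[ℝ] V}
    (hl : P.IsWordOf P.simples l w) : P.IsWordOf P.simples l.reverse w⁻¹ :=
  ⟨fun γ hγ => hl.1 γ (List.mem_reverse.mp hγ), by rw [prod_reverse_eq_inv, hl.2]⟩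

/-- Every element of the Weyl group is the product of a word in the simple reflections. -/
lemma exists_word {w : V ≃ₗ[ℝ] V} (hw : w ∈ P.Weyl) :
    ∃ l, P.IsWordOf P.simples l w := by
  induction hw using Subgroup.closure_induction with
  | mem x hx =>
    obtain ⟨γ, hγ, rfl⟩ := hx
    exact ⟨[γ], P.word_singleton (by simpa using hγ)⟩
  | one => exact ⟨[], P.word_nil⟩
  | mul x y hx hy ihx ihy =>
    obtain ⟨l, hl⟩ := ihx
    obtain ⟨m, hm⟩ := ihy
    exact ⟨l ++ m, P.word_append hl hm⟩
  | inv x hx ihx =>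
    obtain ⟨l, hl⟩ := ihx
    exact ⟨l.reverse, P.word_reverse hl⟩

lemma weyl_inner {w : V ≃ₗ[ℝ] V} (hw : w ∈ P.Weyl) (x y : V) :
    ⟪w x, w y⟫ = ⟪x, y⟫ := by
  obtain ⟨l, hl⟩ := P.exists_word hw
  rw [← hl.2]
  exact prod_reflVec_inner l x y

lemma prod_root {l : List V} (hl : ∀ γ ∈ l, γ ∈ P.roots) {x : V} (hx : x ∈ P.roots) :
    (l.map reflVec).prod x ∈ P.roots := by
  induction l with
  | nil => simpa using hx
  | cons δ t ih =>
    simp only [List.map_cons, List.prod_cons, mul_apply']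
    exact P.reflect_mem δ (hl δ (List.mem_cons_self)) _
      (ih fun γ hγ => hl γ (List.mem_cons_of_mem _ hγ))

lemma weyl_root {w : V ≃ₗ[ℝ] V} (hw : w ∈ P.Weyl) {γ : V} (hγ : γ ∈ P.roots) :
    w γ ∈ P.roots := by
  obtain ⟨l, hl⟩ := P.exists_word hw
  rw [← hl.2]
  exact P.prod_root (fun δ hδ => P.simples_subset (hl.1 δ hδ)) hγ

lemma weyl_pos_or_neg {w : V ≃ₗ[ℝ] V} (hw : w ∈ P.Weyl) {γ : V} (hγ : γ ∈ P.roots) :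
    w γ ∈ P.Pos ∨ w γ ∈ P.Neg :=
  P.root_pos_or_neg' (P.weyl_root hw hγ)

/-- Conjugation formula: `u s_γ u⁻¹ = s_{u γ}`. -/
lemma conj_reflVec {u : V ≃ₗ[ℝ] V} (hu : u ∈ P.Weyl) (γ : V) :
    u * reflVec γ * u⁻¹ = reflVec (u γ) := by
  ext x
  show u (reflVec γ (u⁻¹ x)) = reflVec (u γ) x
  rw [reflVec_apply, reflVec_apply, map_sub, map_smul]
  have h1 : ⟪(u⁻¹ : V ≃ₗ[ℝ] V) x, γ⟫ = ⟪x, u γ⟫ := by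
    have := P.weyl_inner hu ((u⁻¹ : V ≃ₗ[ℝ] V) x) γ
    rw [← this]
    congr 1
    exact u.apply_symm_apply x
  have h2 : (⟪γ, γ⟫ : ℝ) = ⟪u γ, u γ⟫ := (P.weyl_inner hu γ γ).symm
  rw [h1, ← h2]
  congr 1
  exact u.apply_symm_apply x

/-- Moving by a word changes a vector by an element of the span of the letters. -/
lemma word_span (l : List V) (x : V) :
    (l.map reflVec).prod x - x ∈ Submodule.span ℝ {y : V | y ∈ l} := by
  induction l with
  | nil => simp
  | cons γ t ih =>
    simp only [List.map_cons, List.prod_cons, mul_apply']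
    have h1 : reflVec γ ((t.map reflVec).prod x) - x
        = ((t.map reflVec).prod x - x) + (-(cpair ((t.map reflVec).prod x) γ)) • γ := by
      rw [reflVec_apply']
      module
    rw [h1]
    refine Submodule.add_mem _ (Submodule.span_mono ?_ ih) (Submodule.smul_mem _ _ ?_)
    · intro y hy; exact List.mem_cons_of_mem _ hy
    · exact Submodule.subset_span (List.mem_cons_self)

end Words

end RootSystemData
namespace RootSystemData

section PosRefl

variable [DecidableEq V] (P : RootSystemData V)

/-- A simple reflection maps any positive root other than itself to a positive root. -/
lemma reflVec_pos {γ x : V} (hγ : γ ∈ P.simples) (hx : x ∈ P.Pos) (hne : x ≠ γ) :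
    reflVec γ x ∈ P.Pos := by
  obtain ⟨hxr, a, ha⟩ := hx
  have hγr : γ ∈ P.roots := P.simples_subset hγ
  -- find a simple δ₀ ≠ γ with nonzero coefficient
  have hδ0 : ∃ δ₀ ∈ P.simples, δ₀ ≠ γ ∧ a δ₀ ≠ 0 := by
    by_contra hcon
    push_neg at hcon
    have hxg : x = (a γ : ℝ) • γ := by
      rw [ha, Finset.sum_eq_single γ]
      · intro δ hδ hne'
        rw [hcon δ hδ hne', Nat.cast_zero, zero_smul]
      · intro hγ'
        exact absurd hγ hγ'
    rcases P.reduced γ hγr (a γ : ℝ) (by rw [← hxg]; exact hxr) with h1 | h1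
    · exact hne (by rw [hxg, h1, one_smul])
    · have : (0:ℝ) ≤ (a γ : ℝ) := by positivity
      rw [h1] at this
      linarith
  obtain ⟨δ₀, hδ₀S, hδ₀ne, hδ₀a⟩ := hδ0
  have hrr : reflVec γ x ∈ P.roots := P.reflect_mem γ hγr x hxr
  rcases P.root_pos_or_neg' hrr with h | h
  · exact h
  · exfalso
    obtain ⟨_, b, hb⟩ := h
    -- x - cpair x γ • γ = - ∑ b ⇒ compare coefficients at δ₀
    have key : ∑ δ ∈ P.simples, ((a δ + b δ : ℕ) : ℝ) • δ
        = ∑ δ ∈ P.simples, (if δ = γ then cpair x γ else 0) • δ := by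
      have h2 : cpair x γ • γ = ∑ δ ∈ P.simples, (if δ = γ then cpair x γ else 0) • δ := by
        rw [Finset.sum_eq_single γ]
        · simp
        · intro δ _ hne'; simp [hne']
        · intro h'; exact absurd hγ h'
      push_cast
      simp only [add_smul, Finset.sum_add_distrib]
      rw [← ha, ← hb, ← h2, reflVec_apply']
      module
    have := P.rep_unique key δ₀ hδ₀S
    rw [if_neg hδ₀ne] at this
    have h0 : (0:ℝ) ≤ (b δ₀ : ℝ) := by positivity
    have h0' : (0:ℝ) < (a δ₀ : ℝ) := by
      have := Nat.pos_of_ne_zero hδ₀a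
      exact_mod_cast this
    push_cast at this
    linarith

/-- If a simple reflection sends a positive root to a negative root, the root is the simple. -/
lemma eq_of_reflVec_neg {γ x : V} (hγ : γ ∈ P.simples) (hx : x ∈ P.Pos)
    (h : reflVec γ x ∈ P.Neg) : x = γ := by
  by_contra hne
  exact P.pos_neg_disjoint (P.reflVec_pos hγ hx hne) h

lemma reflVec_simple_neg {γ : V} (hγ : γ ∈ P.simples) : reflVec γ γ ∈ P.Neg := by
  have h0 : (⟪γ, γ⟫ : ℝ) ≠ 0 := by
    simp only [ne_eq, inner_self_eq_zero]
    exact P.root_ne_zero γ (P.simples_subset hγ)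
  rw [reflVec_self γ h0, mem_neg_iff, neg_neg]
  exact P.simple_mem_pos hγ

end PosRefl

end RootSystemData
namespace RootSystemData

section Length

variable [DecidableEq V] (P : RootSystemData V)

lemma length_le {l : List V} {w : V ≃ₗ[ℝ] V} (hl : P.IsWordOf P.simples l w) :
    P.length w ≤ l.length :=
  Nat.sInf_le ⟨l, hl, rfl⟩

lemma exists_reduced {w : V ≃ₗ[ℝ] V} (hw : w ∈ P.Weyl) :
    ∃ l, P.IsWordOf P.simples l w ∧ l.length = P.length w := by
  obtain ⟨l, hl⟩ := P.exists_word hw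
  have hne : {n | ∃ l, P.IsWordOf P.simples l w ∧ l.length = n}.Nonempty :=
    ⟨l.length, l, hl, rfl⟩
  exact Nat.sInf_mem hne

lemma prod_mem_weyl {l : List V} (h : ∀ γ ∈ l, γ ∈ P.simples) :
    (l.map reflVec).prod ∈ P.Weyl := by
  induction l with
  | nil => exact Subgroup.one_mem _
  | cons γ t ih =>
    simp only [List.map_cons, List.prod_cons]
    refine Subgroup.mul_mem _ (Subgroup.subset_closure ?_) (ih fun x hx => h x (List.mem_cons_of_mem _ hx))
    exact ⟨γ, by simpa using h γ (List.mem_cons_self), rfl⟩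

lemma word_mem_weyl {l : List V} {w : V ≃ₗ[ℝ] V} (hl : P.IsWordOf P.simples l w) :
    w ∈ P.Weyl := by
  rw [← hl.2]
  exact P.prod_mem_weyl hl.1

lemma length_mul_le (w u : V ≃ₗ[ℝ] V) (hw : w ∈ P.Weyl) (hu : u ∈ P.Weyl) :
    P.length (w * u) ≤ P.length w + P.length u := by
  obtain ⟨l, hl, hll⟩ := P.exists_reduced hw
  obtain ⟨m, hm, hml⟩ := P.exists_reduced hu
  have := P.length_le (P.word_append hl hm)
  rwa [List.length_append, hll, hml] at this

lemma length_inv (w : V ≃ₗ[ℝ] V) (hw : w ∈ P.Weyl) : P.length w⁻¹ = P.length w := by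
  apply le_antisymm
  · obtain ⟨l, hl, hll⟩ := P.exists_reduced hw
    have := P.length_le (P.word_reverse hl)
    rwa [List.length_reverse, hll] at this
  · obtain ⟨l, hl, hll⟩ := P.exists_reduced (Subgroup.inv_mem _ hw)
    have := P.length_le (P.word_reverse hl)
    rw [List.length_reverse, hll, inv_inv] at this
    exact this

/-- Deletion: if `w γ < 0` then a word for `w` yields a shorter word for `w s_γ`. -/
lemma deletion {l : List V} {w : V ≃ₗ[ℝ] V} {γ : V}
    (hl : P.IsWordOf P.simples l w) (hγ : γ ∈ P.simples) (hneg : w γ ∈ P.Neg) :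
    ∃ l', P.IsWordOf P.simples l' (w * reflVec γ) ∧ l'.length + 1 = l.length := by
  induction l generalizing w with
  | nil =>
    exfalso
    have hw1 : w = 1 := by rw [← hl.2]; simp
    rw [hw1] at hneg
    exact P.pos_neg_disjoint (P.simple_mem_pos hγ) (by simpa using hneg)
  | cons δ t ih =>
    have hδ : δ ∈ P.simples := hl.1 δ (List.mem_cons_self)
    set u := (t.map reflVec).prod with hu
    have htw : P.IsWordOf P.simples t u := ⟨fun x hx => hl.1 x (List.mem_cons_of_mem _ hx), rfl⟩
    have hwdu : w = reflVec δ * u := by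
      rw [← hl.2]; simp [hu]
    have huweyl : u ∈ P.Weyl := P.word_mem_weyl htw
    have huγr : u γ ∈ P.roots := P.weyl_root huweyl (P.simples_subset hγ)
    rcases P.root_pos_or_neg' huγr with hp | hn
    · -- u γ positive, so reflVec δ (u γ) = w γ is negative, hence u γ = δ
      have hwγ : reflVec δ (u γ) ∈ P.Neg := by
        rw [← mul_apply', ← hwdu]; exact hneg
      have huγδ : u γ = δ := P.eq_of_reflVec_neg hδ hp hwγ
      refine ⟨t, ⟨htw.1, ?_⟩, by simp⟩
      have hconj : u * reflVec γ * u⁻¹ = reflVec δ := by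
        rw [P.conj_reflVec huweyl, huγδ]
      have : u * reflVec γ = reflVec δ * u := by
        rw [← hconj]; group
      rw [hwdu, mul_assoc, this, ← mul_assoc, reflVec_mul_self, one_mul, htw.2]
    · -- u γ negative: apply induction hypothesis
      obtain ⟨t', ht', hlen⟩ := ih htw hn
      refine ⟨δ :: t', ⟨?_, ?_⟩, ?_⟩
      · intro x hx
        rcases List.mem_cons.mp hx with rfl | hx
        · exact hδ
        · exact ht'.1 x hx
      · simp only [List.map_cons, List.prod_cons, ht'.2]
        rw [hwdu, mul_assoc]
      · simpa using congrArg Nat.succ hlen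

/-- If `w γ < 0` then right multiplication by `s_γ` shortens `w`. -/
lemma length_neg_descent {w : V ≃ₗ[ℝ] V} {γ : V} (hw : w ∈ P.Weyl) (hγ : γ ∈ P.simples)
    (hneg : w γ ∈ P.Neg) : P.length (w * reflVec γ) + 1 ≤ P.length w := by
  obtain ⟨l, hl, hll⟩ := P.exists_reduced hw
  obtain ⟨l', hl', hlen⟩ := P.deletion hl hγ hneg
  have := P.length_le hl'
  omega

/-- If `w γ > 0` then right multiplication by `s_γ` lengthens `w`. -/
lemma length_pos_ascent {w : V ≃ₗ[ℝ] V} {γ : V} (hw : w ∈ P.Weyl) (hγ : γ ∈ P.simples)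
    (hpos : w γ ∈ P.Pos) : P.length w + 1 ≤ P.length (w * reflVec γ) := by
  have hw' : w * reflVec γ ∈ P.Weyl :=
    Subgroup.mul_mem _ hw (P.word_mem_weyl (P.word_singleton hγ))
  have hγ0 : (⟪γ,γ⟫:ℝ) ≠ 0 := by
    simp only [ne_eq, inner_self_eq_zero]
    exact P.root_ne_zero γ (P.simples_subset hγ)
  have hneg : (w * reflVec γ) γ ∈ P.Neg := by
    rw [mul_apply', reflVec_self γ hγ0, map_neg, mem_neg_iff, neg_neg]
    exact hpos
  have := P.length_neg_descent hw' hγ hneg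
  rw [mul_assoc, reflVec_mul_self, mul_one] at this
  omega

/-- Splitting a reduced word: both halves are reduced. -/
lemma reduced_split {l₁ l₂ : List V} {w : V ≃ₗ[ℝ] V}
    (hl : P.IsWordOf P.simples (l₁ ++ l₂) w) (hred : (l₁ ++ l₂).length = P.length w) :
    ((l₁.map reflVec).prod ∈ P.Weyl) ∧ ((l₂.map reflVec).prod ∈ P.Weyl) ∧
    l₁.length = P.length ((l₁.map reflVec).prod) ∧
    l₂.length = P.length ((l₂.map reflVec).prod) := by
  set w₁ := (l₁.map reflVec).prod
  set w₂ := (l₂.map reflVec).prod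
  have h1 : P.IsWordOf P.simples l₁ w₁ :=
    ⟨fun x hx => hl.1 x (List.mem_append_left _ hx), rfl⟩
  have h2 : P.IsWordOf P.simples l₂ w₂ :=
    ⟨fun x hx => hl.1 x (List.mem_append_right _ hx), rfl⟩
  have hw1 : w₁ ∈ P.Weyl := P.word_mem_weyl h1
  have hw2 : w₂ ∈ P.Weyl := P.word_mem_weyl h2
  have hmul : w = w₁ * w₂ := by rw [← hl.2, List.map_append, List.prod_append]
  have hle := P.length_mul_le w₁ w₂ hw1 hw2
  rw [← hmul] at hle
  have hle1 := P.length_le h1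
  have hle2 := P.length_le h2
  rw [List.length_append] at hred
  exact ⟨hw1, hw2, by omega, by omega⟩

end Length

end RootSystemData
namespace RootSystemData

section Minuscule

variable [DecidableEq V] (P : RootSystemData V)

lemma inner_ne_zero_of_root {γ : V} (hγ : γ ∈ P.roots) : (⟪γ, γ⟫ : ℝ) ≠ 0 := by
  simp only [ne_eq, inner_self_eq_zero]
  exact P.root_ne_zero γ hγ

lemma inner_pos_of_ne_zero {x : V} (h : x ≠ 0) : (0:ℝ) < ⟪x, x⟫ := by
  have h1 := inner_self_eq_zero (𝕜 := ℝ) (x := x)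
  rcases (real_inner_self_nonneg (x := x)).lt_or_eq with h3 | h3
  · exact h3
  · exact absurd (h1.mp h3.symm) h

/-- For a root written in the simple basis, pairing with the fundamental weight
extracts the coefficient of `α` (simply-laced case). -/
lemma cpair_eq_coeff (hSL : P.SimplyLaced) {α ϖ : V} (hα : α ∈ P.simples)
    (hfw : P.IsFundamentalWeight α ϖ) {γ : V} (hγ : γ ∈ P.roots)
    (a : V → ℕ) (ha : γ = ∑ δ ∈ P.simples, (a δ : ℝ) • δ) :
    cpair ϖ γ = (a α : ℝ) := by
  have hγ0 : (⟪γ, γ⟫ : ℝ) ≠ 0 := P.inner_ne_zero_of_root hγ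
  have hinner : (⟪ϖ, γ⟫ : ℝ) = (a α : ℝ) * (⟪γ, γ⟫ / 2) := by
    have h1 : (⟪ϖ, γ⟫ : ℝ) = ∑ δ ∈ P.simples, (a δ : ℝ) * ⟪ϖ, δ⟫ := by
      conv_lhs => rw [ha]
      rw [inner_sum]
      exact Finset.sum_congr rfl fun δ _ => real_inner_smul_right _ _ _
    rw [h1, Finset.sum_eq_single α]
    · -- at α : ⟪ϖ, α⟫ = ⟪γ,γ⟫/2
      have hα0 : (⟪α, α⟫ : ℝ) ≠ 0 := P.inner_ne_zero_of_root (P.simples_subset hα)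
      have hcp : cpair ϖ α = 1 := hfw.1
      have : (⟪ϖ, α⟫ : ℝ) = ⟪α, α⟫ / 2 := by
        unfold cpair at hcp
        field_simp at hcp
        linarith
      rw [this, hSL α (P.simples_subset hα) γ hγ]
    · intro δ hδ hne
      have hcp : cpair ϖ δ = 0 := hfw.2 δ hδ hne
      have hδ0 : (⟪δ, δ⟫ : ℝ) ≠ 0 := P.inner_ne_zero_of_root (P.simples_subset hδ)
      have : (⟪ϖ, δ⟫ : ℝ) = 0 := by
        unfold cpair at hcp
        field_simp at hcp
        linarith
      rw [this, mul_zero]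
    · intro h; exact absurd hα h
  unfold cpair
  rw [hinner]
  field_simp

/-- `w` maps roots supported away from `α` to positive roots. -/
lemma wpos {α : V} {w : V ≃ₗ[ℝ] V} (hw : w ∈ P.Weyl)
    (hWI : ∀ γ ∈ P.simples.erase α, w γ ∈ P.Pos)
    {τ : V} (hτ : τ ∈ P.roots) (a : V → ℕ)
    (ha : τ = ∑ δ ∈ P.simples.erase α, (a δ : ℝ) • δ) :
    w τ ∈ P.Pos := by
  refine ⟨P.weyl_root hw hτ, ?_⟩
  have hmap : w τ = ∑ δ ∈ P.simples.erase α, (a δ : ℝ) • w δ := by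
    rw [ha, map_sum]
    exact Finset.sum_congr rfl fun δ _ => map_smul _ _ _
  rw [hmap]
  exact P.isPosComb_sum _ _ _ fun δ hδ => (hWI δ hδ).2

/-- Any positive root sent negative by `w⁻¹` has `α`-coefficient exactly 1. -/
lemma inv_coeff_alpha (hSL : P.SimplyLaced) {α ϖ : V} (hα : α ∈ P.simples)
    (hfw : P.IsFundamentalWeight α ϖ) (hminu : P.IsMinusculeWeight ϖ)
    {w : V ≃ₗ[ℝ] V} (hw : w ∈ P.Weyl)
    (hWI : ∀ γ ∈ P.simples.erase α, w γ ∈ P.Pos)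
    {μ : V} (hμ : μ ∈ P.Pos) (hneg : w⁻¹ μ ∈ P.Neg)
    (b : V → ℕ) (hb : -(w⁻¹ μ) = ∑ δ ∈ P.simples, (b δ : ℝ) • δ) :
    b α = 1 := by
  have hτpos : -(w⁻¹ μ) ∈ P.Pos := hneg
  have hτr : -(w⁻¹ μ) ∈ P.roots := hτpos.1
  have hcp : cpair ϖ (-(w⁻¹ μ)) = (b α : ℝ) :=
    P.cpair_eq_coeff hSL hα hfw hτr b hb
  have hle : (b α : ℝ) ≤ 1 := by
    rw [← hcp]
    exact hminu _ hτpos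
  have hble : b α ≤ 1 := by exact_mod_cast hle
  rcases Nat.lt_or_ge (b α) 1 with h0 | h1
  · exfalso
    have hb0 : b α = 0 := by omega
    -- then -(w⁻¹ μ) is supported away from α, so w of it is positive, i.e. -μ positive
    have ha' : -(w⁻¹ μ) = ∑ δ ∈ P.simples.erase α, (b δ : ℝ) • δ := by
      rw [hb, ← Finset.add_sum_erase _ _ hα, hb0, Nat.cast_zero, zero_smul, zero_add]
    have := P.wpos hw hWI hτr b ha'
    have hwτ : w (-(w⁻¹ μ)) = -μ := by
      rw [map_neg]
      congr 1
      exact w.apply_symm_apply μ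
    rw [hwτ] at this
    exact P.pos_neg_disjoint hμ (by simpa [mem_neg_iff] using this)
  · omega

/-- Decomposition: a non-simple positive root minus some simple root in its support
is again a root. -/
lemma decomp (hSL : P.SimplyLaced) {μ : V} (hμ : μ ∈ P.Pos) (hns : μ ∉ P.simples)
    (a : V → ℕ) (ha : μ = ∑ δ ∈ P.simples, (a δ : ℝ) • δ) :
    ∃ δ₀ ∈ P.simples, 1 ≤ a δ₀ ∧ μ - δ₀ ∈ P.roots := by
  have hμr : μ ∈ P.roots := hμ.1
  have hμ0 : (0:ℝ) < ⟪μ, μ⟫ := inner_pos_of_ne_zero (P.root_ne_zero μ hμr)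
  have hsum : (⟪μ, μ⟫ : ℝ) = ∑ δ ∈ P.simples, (a δ : ℝ) * ⟪μ, δ⟫ := by
    have h0 := congrArg (fun y => (⟪μ, y⟫ : ℝ)) ha
    simp only [inner_sum, real_inner_smul_right] at h0
    exact h0
  have hex : ∃ δ₀ ∈ P.simples, 0 < (a δ₀ : ℝ) * ⟪μ, δ₀⟫ := by
    by_contra hcon
    push_neg at hcon
    have : (⟪μ, μ⟫:ℝ) ≤ 0 := hsum ▸ Finset.sum_nonpos hcon
    linarith
  obtain ⟨δ₀, hδ₀S, hδ₀⟩ := hex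
  have hδ₀r : δ₀ ∈ P.roots := P.simples_subset hδ₀S
  have hanneg : (0:ℝ) ≤ (a δ₀ : ℝ) := by positivity
  have ha1 : 1 ≤ a δ₀ := by
    by_contra h
    have : a δ₀ = 0 := by omega
    rw [this] at hδ₀
    simp at hδ₀
  have hip : (0:ℝ) < ⟪μ, δ₀⟫ := by
    rcases lt_or_ge 0 (⟪μ, δ₀⟫:ℝ) with h | h
    · exact h
    · nlinarith
  have hδ0 : (0:ℝ) < ⟪δ₀, δ₀⟫ := inner_pos_of_ne_zero (P.root_ne_zero δ₀ hδ₀r)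
  obtain ⟨n, hn⟩ := P.pairing_int μ hμr δ₀ hδ₀r
  have hnpos : (0:ℝ) < (n:ℝ) := by
    rw [hn]
    unfold cpair
    positivity
  have hSLe : (⟪μ, μ⟫:ℝ) = ⟪δ₀, δ₀⟫ := hSL μ hμr δ₀ hδ₀r
  have hcs : (⟪μ, δ₀⟫:ℝ) * ⟪μ, δ₀⟫ ≤ ⟪μ, μ⟫ * ⟪δ₀, δ₀⟫ := real_inner_mul_inner_self_le μ δ₀
  have hneq : (n:ℝ) * ⟪δ₀, δ₀⟫ = 2 * ⟪μ, δ₀⟫ := by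
    unfold cpair at hn
    rw [eq_div_iff hδ0.ne'] at hn
    exact hn
  have hiple : (⟪μ, δ₀⟫:ℝ) ≤ ⟪δ₀, δ₀⟫ := by nlinarith [hcs, hSLe, hip, hδ0]
  have hn2 : (n:ℝ) ≤ 2 := by nlinarith [hneq, hiple, hδ0]
  have hn1 : n = 1 ∨ n = 2 := by
    have h1 : (0:ℤ) < n := by exact_mod_cast hnpos
    have h2 : (n:ℤ) ≤ 2 := by exact_mod_cast hn2
    omega
  rcases hn1 with rfl | rfl
  · refine ⟨δ₀, hδ₀S, ha1, ?_⟩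
    have := P.reflect_mem δ₀ hδ₀r μ hμr
    rw [reflVec_apply', ← hn] at this
    simpa using this
  · exfalso
    -- cpair = 2 forces μ = δ₀, contradicting non-simplicity
    have h2 : (⟪μ, δ₀⟫ : ℝ) = ⟪δ₀, δ₀⟫ := by
      push_cast at hneq
      linarith
    have : (⟪μ - δ₀, μ - δ₀⟫ : ℝ) = 0 := by
      rw [inner_sub_left, inner_sub_right, inner_sub_right]
      rw [real_inner_comm δ₀ μ] at *
      linarith
    have heq : μ = δ₀ := by
      have := inner_self_eq_zero.mp this
      rwa [sub_eq_zero] at this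
    exact hns (heq ▸ hδ₀S)

end Minuscule

end RootSystemData
namespace RootSystemData

section Max

variable [DecidableEq V] (P : RootSystemData V)

lemma sub_simple_rep {μ δ₀ : V} (a : V → ℕ) (hδ₀ : δ₀ ∈ P.simples) (h1 : 1 ≤ a δ₀)
    (ha : μ = ∑ δ ∈ P.simples, (a δ : ℝ) • δ) :
    ∃ a' : V → ℕ, (μ - δ₀ = ∑ δ ∈ P.simples, ((a' δ : ℕ) : ℝ) • δ)
    ∧ (∑ δ ∈ P.simples, a' δ) + 1 = ∑ δ ∈ P.simples, a δ := by
  refine ⟨fun τ => if τ = δ₀ then a δ₀ - 1 else a τ, ?_, ?_⟩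
  all_goals set a' : V → ℕ := fun τ => if τ = δ₀ then a δ₀ - 1 else a τ with ha'
  · rw [ha, ← Finset.add_sum_erase _ (fun δ => ((a δ : ℝ)) • δ) hδ₀,
      ← Finset.add_sum_erase _ (fun δ => ((a' δ : ℝ)) • δ) hδ₀]
    have h2 : ∑ x ∈ P.simples.erase δ₀, (a' x : ℝ) • x
        = ∑ x ∈ P.simples.erase δ₀, (a x : ℝ) • x := by
      refine Finset.sum_congr rfl fun x hx => ?_
      have : x ≠ δ₀ := Finset.ne_of_mem_erase hx
      simp [ha', this]
    rw [h2]
    have h3 : (a' δ₀ : ℝ) • δ₀ = (a δ₀ : ℝ) • δ₀ - δ₀ := by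
      have : a' δ₀ = a δ₀ - 1 := by simp [ha']
      rw [this, Nat.cast_sub h1, sub_smul, Nat.cast_one, one_smul]
    rw [h3]
    abel
  · rw [← Finset.add_sum_erase _ a' hδ₀, ← Finset.add_sum_erase _ a hδ₀]
    have h2 : ∑ x ∈ P.simples.erase δ₀, a' x = ∑ x ∈ P.simples.erase δ₀, a x := by
      refine Finset.sum_congr rfl fun x hx => ?_
      simp [ha', Finset.ne_of_mem_erase hx]
    have h3 : a' δ₀ = a δ₀ - 1 := by simp [ha']
    omega

lemma exists_split_last {δ : V} {l : List V} (h : δ ∈ l) :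
    ∃ a b : List V, l = a ++ δ :: b ∧ δ ∉ b := by
  induction l with
  | nil => simp at h
  | cons γ t ih =>
    by_cases ht : δ ∈ t
    · obtain ⟨a, b, rfl, hb⟩ := ih ht
      exact ⟨γ :: a, b, rfl, hb⟩
    · rcases List.mem_cons.mp h with rfl | h'
      · exact ⟨[], t, rfl, ht⟩
      · exact absurd h' ht

/-- **Maximality**: every positive root sent negative by `w⁻¹` is dominated by `-w⁻¹ β`. -/
lemma max_inversion (hSL : P.SimplyLaced) {α ϖ : V} (hα : α ∈ P.simples)
    (hfw : P.IsFundamentalWeight α ϖ) (hminu : P.IsMinusculeWeight ϖ)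
    {w : V ≃ₗ[ℝ] V} (hw : w ∈ P.Weyl)
    (hWI : ∀ γ ∈ P.simples.erase α, w γ ∈ P.Pos)
    {β : V} (hβ : β ∈ P.simples) (hβneg : w⁻¹ β ∈ P.Neg)
    (huniq : ∀ γ ∈ P.simples, w⁻¹ γ ∈ P.Neg → γ = β)
    (n : ℕ) :
    ∀ μ, μ ∈ P.Pos → w⁻¹ μ ∈ P.Neg →
    (∃ a : V → ℕ, μ = ∑ δ ∈ P.simples, (a δ : ℝ) • δ ∧ ∑ δ ∈ P.simples, a δ ≤ n) →
    ∃ q : V → ℝ, (∀ δ, 0 ≤ q δ) ∧ -(w⁻¹ β) + w⁻¹ μ = ∑ δ ∈ P.simples, q δ • δ := by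
  have hwinv : w⁻¹ ∈ P.Weyl := Subgroup.inv_mem _ hw
  induction n with
  | zero =>
    rintro μ hμ hneg ⟨a, ha, hle⟩
    exfalso
    have hz : ∀ δ ∈ P.simples, a δ = 0 :=
      Finset.sum_eq_zero_iff.mp (Nat.le_zero.mp hle)
    have : μ = 0 := by
      rw [ha]
      exact Finset.sum_eq_zero fun δ hδ => by rw [hz δ hδ, Nat.cast_zero, zero_smul]
    exact P.root_ne_zero μ hμ.1 this
  | succ n ih =>
    rintro μ hμ hneg ⟨a, ha, hle⟩
    by_cases hsimp : μ ∈ P.simples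
    · have hμβ : μ = β := huniq μ hsimp hneg
      refine ⟨0, fun δ => le_refl 0, ?_⟩
      rw [hμβ]
      simp
    · obtain ⟨δ₀, hδ₀S, h1, hroot⟩ := P.decomp hSL hμ hsimp a ha
      obtain ⟨a', ha', hsum'⟩ := P.sub_simple_rep a hδ₀S h1 ha
      have hμ'pos : μ - δ₀ ∈ P.Pos := ⟨hroot, a', ha'⟩
      have hδ₀r : δ₀ ∈ P.roots := P.simples_subset hδ₀S
      have hwδr : w⁻¹ δ₀ ∈ P.roots := P.weyl_root hwinv hδ₀r
      have hwμ'r : w⁻¹ (μ - δ₀) ∈ P.roots := P.weyl_root hwinv hroot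
      have hsub : w⁻¹ (μ - δ₀) = w⁻¹ μ - w⁻¹ δ₀ := map_sub _ _ _
      rcases P.root_pos_or_neg' hwδr with hδpos | hδneg
      · rcases P.root_pos_or_neg' hwμ'r with hμ'p | hμ'n
        · -- impossible: -(w⁻¹μ) + w⁻¹(μ-δ₀) + w⁻¹δ₀ = 0 with all positive
          exfalso
          obtain ⟨b1, hb1⟩ := (hneg : -(w⁻¹ μ) ∈ P.Pos).2
          have hb1α : b1 α = 1 :=
            P.inv_coeff_alpha hSL hα hfw hminu hw hWI hμ hneg b1 hb1
          obtain ⟨p1, hp1⟩ := hμ'p.2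
          obtain ⟨p2, hp2⟩ := hδpos.2
          have key : ∑ δ ∈ P.simples, ((b1 δ + p1 δ + p2 δ : ℕ) : ℝ) • δ
              = ∑ δ ∈ P.simples, ((0:ℝ)) • δ := by
            push_cast
            simp only [add_smul, Finset.sum_add_distrib]
            rw [← hb1, ← hp1, ← hp2, hsub]
            simp only [zero_smul, Finset.sum_const_zero]
            abel
          have := P.rep_unique key α hα
          push_cast at this
          have hb10 : (0:ℝ) ≤ (p1 α : ℝ) := by positivity
          have hb20 : (0:ℝ) ≤ (p2 α : ℝ) := by positivity
          rw [hb1α] at this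
          push_cast at this
          linarith
        · -- induct on μ - δ₀
          obtain ⟨q', hq'0, hq'⟩ := ih (μ - δ₀) hμ'pos hμ'n ⟨a', ha', by omega⟩
          obtain ⟨p2, hp2⟩ := hδpos.2
          refine ⟨fun δ => q' δ + (p2 δ : ℝ),
            fun δ => add_nonneg (hq'0 δ) (by positivity), ?_⟩
          have : -(w⁻¹ β) + w⁻¹ μ = (-(w⁻¹ β) + w⁻¹ (μ - δ₀)) + w⁻¹ δ₀ := by
            rw [hsub]; abel
          rw [this, hq', hp2]
          rw [← Finset.sum_add_distrib]
          exact Finset.sum_congr rfl fun δ _ => (add_smul _ _ _).symm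
      · -- w⁻¹ δ₀ negative : δ₀ = β
        have hδβ : δ₀ = β := huniq δ₀ hδ₀S hδneg
        rcases P.root_pos_or_neg' hwμ'r with hμ'p | hμ'n
        · obtain ⟨p1, hp1⟩ := hμ'p.2
          refine ⟨fun δ => (p1 δ : ℝ), fun δ => by positivity, ?_⟩
          rw [← hp1, hsub, hδβ]
          abel
        · -- impossible by α-coefficients : 1 = 1 + 1
          exfalso
          obtain ⟨b1, hb1⟩ := (hneg : -(w⁻¹ μ) ∈ P.Pos).2
          obtain ⟨b2, hb2⟩ := (hμ'n : -(w⁻¹ (μ - δ₀)) ∈ P.Pos).2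
          obtain ⟨b3, hb3⟩ := (hβneg : -(w⁻¹ β) ∈ P.Pos).2
          have hb1α : b1 α = 1 :=
            P.inv_coeff_alpha hSL hα hfw hminu hw hWI hμ hneg b1 hb1
          have hb2α : b2 α = 1 :=
            P.inv_coeff_alpha hSL hα hfw hminu hw hWI hμ'pos hμ'n b2 hb2
          have hb3α : b3 α = 1 :=
            P.inv_coeff_alpha hSL hα hfw hminu hw hWI (P.simple_mem_pos hβ) hβneg b3 hb3
          have key : ∑ δ ∈ P.simples, ((b1 δ : ℕ) : ℝ) • δ
              = ∑ δ ∈ P.simples, ((b2 δ + b3 δ : ℕ) : ℝ) • δ := by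
            push_cast
            simp only [add_smul, Finset.sum_add_distrib]
            rw [← hb1, ← hb2, ← hb3, hsub, hδβ]
            abel
          have := P.rep_unique key α hα
          push_cast at this
          rw [hb1α, hb2α, hb3α] at this
          norm_num at this
      -- end cases
  -- end induction

end Max

end RootSystemData
namespace RootSystemData

section Desc

variable [DecidableEq V] (P : RootSystemData V)

lemma pos_of_reduced_prefix {p : V ≃ₗ[ℝ] V} {γ : V} (hp : p ∈ P.Weyl) (hγ : γ ∈ P.simples)
    (h : P.length (p * reflVec γ) = P.length p + 1) : p γ ∈ P.Pos := by
  rcases P.weyl_pos_or_neg hp (P.simples_subset hγ) with hh | hh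
  · exact hh
  · exfalso
    have := P.length_neg_descent hp hγ hh
    omega

lemma pos_of_reduced_suffix {u : V ≃ₗ[ℝ] V} {γ : V} (hu : u ∈ P.Weyl) (hγ : γ ∈ P.simples)
    (h : P.length (reflVec γ * u) = P.length u + 1) : u⁻¹ γ ∈ P.Pos := by
  have huinv : u⁻¹ ∈ P.Weyl := Subgroup.inv_mem _ hu
  rcases P.weyl_pos_or_neg huinv (P.simples_subset hγ) with hh | hh
  · exact hh
  · exfalso
    have hdesc := P.length_neg_descent huinv hγ hh
    have hmem : u⁻¹ * reflVec γ ∈ P.Weyl :=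
      Subgroup.mul_mem _ huinv (P.word_mem_weyl (P.word_singleton hγ))
    have he : (u⁻¹ * reflVec γ)⁻¹ = reflVec γ * u := by
      rw [mul_inv_rev, reflVec_inv, inv_inv]
    have h1 : P.length (u⁻¹ * reflVec γ) = P.length (reflVec γ * u) := by
      rw [← he, P.length_inv _ hmem]
    have h2 : P.length u⁻¹ = P.length u := P.length_inv _ hu
    omega

end Desc

end RootSystemData
/-- In the minuscule situation, if `β` is the unique simple root with
`w⁻¹(β) ∈ R⁻`, then the support of `w` equals the support of the root `-w⁻¹(β)`. -/
theorem supp_eq_supp_root [DecidableEq V] (P : RootSystemData V)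
    (hSL : P.SimplyLaced) (hirr : P.Irred)
    (α : V) (hα : α ∈ P.simples) (ϖ : V)
    (hfw : P.IsFundamentalWeight α ϖ) (hminu : P.IsMinusculeWeight ϖ)
    (w : V ≃ₗ[ℝ] V) (hw : w ∈ P.Weyl)
    (hWI : ∀ γ ∈ P.simples.erase α, w γ ∈ P.Pos)
    (β : V) (hβ : β ∈ P.simples) (hβneg : w.symm β ∈ P.Neg)
    (huniq : ∀ γ ∈ P.simples, w.symm γ ∈ P.Neg → γ = β)
    (c : V → ℕ) (hc : -(w.symm β) = ∑ δ ∈ P.simples, (c δ : ℝ) • δ) :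
    P.Supp w = {δ | δ ∈ P.simples ∧ c δ ≠ 0} := by
  have hβneg' : w⁻¹ β ∈ P.Neg := hβneg
  have huniq' : ∀ γ ∈ P.simples, w⁻¹ γ ∈ P.Neg → γ = β := huniq
  have hc' : -(w⁻¹ β) = ∑ δ ∈ P.simples, (c δ : ℝ) • δ := hc
  ext δ
  simp only [RootSystemData.Supp, Set.mem_setOf_eq]
  constructor
  · rintro ⟨hδS, l, ⟨hlw, hlen⟩, hδl⟩
    refine ⟨hδS, ?_⟩
    -- split off the last occurrence of δ in the reduced word
    obtain ⟨A, B, rfl, hδB⟩ := RootSystemData.exists_split_last hδl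
    have hδr : δ ∈ P.roots := P.simples_subset hδS
    have hδ0 : (⟪δ, δ⟫ : ℝ) ≠ 0 := P.inner_ne_zero_of_root hδr
    -- lengths of the pieces
    have hsplit1 := P.reduced_split (l₁ := A) (l₂ := δ :: B) hlw hlen
    have hlab : A ++ δ :: B = (A ++ [δ]) ++ B := by simp
    have hlw2 : P.IsWordOf P.simples ((A ++ [δ]) ++ B) w := by rwa [← hlab]
    have hlen2 : ((A ++ [δ]) ++ B).length = P.length w := by rwa [← hlab]
    have hsplit2 := P.reduced_split (l₁ := A ++ [δ]) (l₂ := B) hlw2 hlen2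
    obtain ⟨hpW, hduW, hpLen, hduLen⟩ := hsplit1
    obtain ⟨hpdW, huW, hpdLen, huLen⟩ := hsplit2
    have hdu : ((δ :: B).map reflVec).prod = reflVec δ * ((B.map reflVec).prod) := by
      simp
    have hpd : (((A ++ [δ]).map reflVec).prod) = ((A.map reflVec).prod) * reflVec δ := by
      simp
    rw [hdu] at hduW hduLen
    rw [hpd] at hpdW hpdLen
    -- positivity of u⁻¹ δ and p δ
    have hρpos : ((B.map reflVec).prod)⁻¹ δ ∈ P.Pos := by
      refine P.pos_of_reduced_suffix huW hδS ?_
      rw [← hduLen, ← huLen]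
      simp
    have hpδpos : ((A.map reflVec).prod) δ ∈ P.Pos := by
      refine P.pos_of_reduced_prefix hpW hδS ?_
      rw [← hpdLen, ← hpLen]
      simp
    -- the inversion ρ
    set u : V ≃ₗ[ℝ] V := ((B.map reflVec).prod) with hu
    set p : V ≃ₗ[ℝ] V := ((A.map reflVec).prod) with hp
    set ρ : V := u⁻¹ δ with hρ
    have hwprod : w = p * (reflVec δ * u) := by
      rw [← hlw.2, List.map_append, List.prod_append, List.map_cons, List.prod_cons]
    have hwρ : w ρ = -(p δ) := by
      rw [hwprod]
      show p (reflVec δ (u (u⁻¹ δ))) = -(p δ)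
      have h3 : u (u⁻¹ δ) = δ := u.apply_symm_apply δ
      rw [h3, RootSystemData.reflVec_self δ hδ0, map_neg]
    have hwinvμ : w⁻¹ (p δ) = -ρ := by
      have : p δ = w (-ρ) := by rw [map_neg, hwρ, neg_neg]
      rw [this]
      exact w.symm_apply_apply (-ρ)
    have hμneg : w⁻¹ (p δ) ∈ P.Neg := by
      show -(w⁻¹ (p δ)) ∈ P.Pos
      rw [hwinvμ, neg_neg]
      exact hρpos
    -- apply maximality
    obtain ⟨m, hm⟩ := hpδpos.2
    obtain ⟨q, hq0, hq⟩ := P.max_inversion hSL hα hfw hminu hw hWI hβ hβneg' huniq'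
      (∑ τ ∈ P.simples, m τ) (p δ) hpδpos hμneg ⟨m, hm, le_refl _⟩
    rw [hwinvμ] at hq
    -- coordinate of δ in ρ is 1
    obtain ⟨r, hr⟩ := hρpos.2
    have hspan : ρ - δ ∈ Submodule.span ℝ {y : V | y ∈ B} := by
      have h4 := RootSystemData.word_span B.reverse δ
      rw [RootSystemData.prod_reverse_eq_inv] at h4
      have h5 : {y : V | y ∈ B.reverse} = {y : V | y ∈ B} := by
        ext y; simp
      rwa [h5] at h4
    have hspan2 : ρ - δ ∈ Submodule.span ℝ ((B.toFinset : Finset V) : Set V) := by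
      rwa [List.coe_toFinset]
    obtain ⟨f, -, hf⟩ := Submodule.mem_span_finset.mp hspan2
    have hBsub : B.toFinset ⊆ P.simples := by
      intro τ hτ
      exact hlw.1 τ (by simp [List.mem_toFinset.mp hτ])
    have hδnB : δ ∉ B.toFinset := fun h => hδB (List.mem_toFinset.mp h)
    have hrep2 : ρ = ∑ τ ∈ P.simples,
        ((if τ = δ then (1:ℝ) else 0) + (if τ ∈ B.toFinset then f τ else 0)) • τ := by
      have e1 : ∑ τ ∈ P.simples, (if τ = δ then (1:ℝ) else 0) • τ = δ := by
        rw [Finset.sum_eq_single δ]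
        · simp
        · intro τ _ hne; simp [hne]
        · intro h; exact absurd hδS h
      have e2 : ∑ τ ∈ P.simples, (if τ ∈ B.toFinset then f τ else 0) • τ
          = ∑ τ ∈ B.toFinset, f τ • τ := by
        rw [← Finset.sum_subset hBsub (fun x _ hx => by simp [hx])]
        exact Finset.sum_congr rfl fun x hx => by simp [hx]
      simp only [add_smul, Finset.sum_add_distrib, e1, e2, hf]
      abel
    have hrδ : (r δ : ℝ) = 1 := by
      have := P.rep_unique (hr.symm.trans hrep2) δ hδS
      rw [if_pos rfl, if_neg hδnB, add_zero] at this
      exact this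
    -- compare coefficients of δ in  θ = ρ + Σ q
    have hfinal : ∑ τ ∈ P.simples, (c τ : ℝ) • τ
        = ∑ τ ∈ P.simples, ((r τ : ℝ) + q τ) • τ := by
      rw [← hc']
      simp only [add_smul, Finset.sum_add_distrib, ← hr, ← hq]
      abel
    have hcδ := P.rep_unique hfinal δ hδS
    rw [hrδ] at hcδ
    intro h0
    rw [h0] at hcδ
    have := hq0 δ
    norm_num at hcδ
    linarith
  · rintro ⟨hδS, hcδ⟩
    obtain ⟨l₀, hl₀, hlen₀⟩ := P.exists_reduced hw
    refine ⟨hδS, l₀, ⟨hl₀, hlen₀⟩, ?_⟩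
    by_contra hδl₀
    have hword : P.IsWordOf P.simples l₀.reverse w⁻¹ := P.word_reverse hl₀
    have hspan : w⁻¹ β - β ∈ Submodule.span ℝ {y : V | y ∈ l₀} := by
      have h4 := RootSystemData.word_span l₀.reverse β
      rw [RootSystemData.prod_reverse_eq_inv, hl₀.2] at h4
      have h5 : {y : V | y ∈ l₀.reverse} = {y : V | y ∈ l₀} := by
        ext y; simp
      rwa [h5] at h4
    have hspan2 : w⁻¹ β - β ∈ Submodule.span ℝ ((l₀.toFinset : Finset V) : Set V) := by
      rwa [List.coe_toFinset]
    obtain ⟨f, -, hf⟩ := Submodule.mem_span_finset.mp hspan2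
    have hsub : l₀.toFinset ⊆ P.simples := by
      intro τ hτ
      exact hl₀.1 τ (List.mem_toFinset.mp hτ)
    have hδnl : δ ∉ l₀.toFinset := fun h => hδl₀ (List.mem_toFinset.mp h)
    -- -(w⁻¹ β) + β = Σ c + β  is supported in l₀
    have hrep : ∑ τ ∈ P.simples, ((c τ : ℝ) + (if τ = β then (1:ℝ) else 0)) • τ
        = ∑ τ ∈ P.simples, (if τ ∈ l₀.toFinset then -(f τ) else 0) • τ := by
      have e1 : ∑ τ ∈ P.simples, (if τ = β then (1:ℝ) else 0) • τ = β := by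
        rw [Finset.sum_eq_single β]
        · simp
        · intro τ _ hne; simp [hne]
        · intro h; exact absurd hβ h
      have e2 : ∑ τ ∈ P.simples, (if τ ∈ l₀.toFinset then -(f τ) else 0) • τ
          = ∑ τ ∈ l₀.toFinset, (-(f τ)) • τ := by
        rw [← Finset.sum_subset hsub (fun x _ hx => by simp [hx])]
        exact Finset.sum_congr rfl fun x hx => by simp [hx]
      have e3 : ∑ τ ∈ l₀.toFinset, (-(f τ)) • τ = -(w⁻¹ β - β) := by
        rw [← hf, ← Finset.sum_neg_distrib]
        exact Finset.sum_congr rfl fun x _ => neg_smul _ _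
      simp only [add_smul, Finset.sum_add_distrib, e1, e2, e3, ← hc']
      abel
    have hzero := P.rep_unique hrep δ hδS
    rw [if_neg hδnl] at hzero
    have h1 : (0:ℝ) ≤ (c δ : ℝ) := by positivity
    have h2 : (0:ℝ) ≤ (if δ = β then (1:ℝ) else 0) := by split_ifs <;> norm_num
    have hc0 : (c δ : ℝ) = 0 := by linarith
    exact hcδ (by exact_mod_cast hc0)
end
end
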